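/- arXiv:1911.04935 — 7 statements merged into one kernel-verified Lean document; each statement's English description precedes it below -/
import Mathlib

section
/- Every return-time set contains a set of the form (Q−Q)∩ℕ where Q ⊆ ℕ has positive upper density. -/
open MeasureTheory Filter

/-- The process `X` is (strictly) stationary for the probability measure `μ`. -/
def IsStationaryProcess {Ω F : Type*} [MeasurableSpace Ω]
    (μ : Measure Ω) (X : ℤ → Ω → F) : Prop :=
  ∀ (k : ℤ) (n : ℕ) (t : Fin n → ℤ) (s : Fin n → Set F),
    μ (⋂ j, X (t j) ⁻¹' s j) = μ (⋂ j, X (t j + k) ⁻¹' s j)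

/-- Shannon entropy of a finite-valued random variable. -/
noncomputable def shannonEntropy {Ω F : Type*} [MeasurableSpace Ω] (μ : Measure Ω)
    [Fintype F] (Y : Ω → F) : ℝ :=
  ∑ y : F, Real.negMulLog ((μ (Y ⁻¹' {y})).toReal)

/-- Joint Shannon entropy of the variables of the process indexed by a
finite set of times. -/
noncomputable def jointEntropy {Ω F : Type*} [MeasurableSpace Ω] [Fintype F]
    (μ : Measure Ω) (X : ℤ → Ω → F) (s : Finset ℤ) : ℝ :=
  shannonEntropy μ (fun ω (i : s) => X i ω)

/-- Entropy of a finite-valued process: h = lim_n (1/n) H(X_1,…,X_n)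
(as a limsup). -/
noncomputable def procEntropy {Ω F : Type*} [MeasurableSpace Ω] [Fintype F]
    (μ : Measure Ω) (X : ℤ → Ω → F) : ℝ :=
  Filter.atTop.limsup (fun n : ℕ => jointEntropy μ X (Finset.Icc 1 (n : ℤ)) / n)

/-- Conditional entropy H(X_0 | X_i : i ∈ S), as the infimum over finite
subsets s ⊆ S of H(X_0, X_s) − H(X_s). -/
noncomputable def condEntropyOn {Ω F : Type*} [MeasurableSpace Ω] [Fintype F]
    (μ : Measure Ω) (X : ℤ → Ω → F) (S : Set ℤ) : ℝ :=
  ⨅ s : {s : Finset ℤ // ↑s ⊆ S},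
    (jointEntropy μ X (insert 0 s.1) - jointEntropy μ X s.1)

/-- X_0 is (a.e.) measurable with respect to the σ-algebra generated by
the variables (X_i)_{i ∈ S}. -/
def measurableWrtOn {Ω F : Type*} [MeasurableSpace Ω] [MeasurableSpace F]
    (μ : Measure Ω) (X : ℤ → Ω → F) (S : Set ℤ) : Prop :=
  ∃ g : (S → F) → F, Measurable g ∧
    ∀ᵐ ω ∂μ, X 0 ω = g (fun i => X i ω)

/-- A set P ⊆ ℕ is predictive if for every zero-entropy finite-valued
stationary process, X_0 is measurable with respect to (X_p)_{p ∈ P}. -/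
def Predictive (P : Set ℕ) : Prop :=
  ∀ (Ω F : Type) [MeasurableSpace Ω] [MeasurableSpace F] [Fintype F]
    (μ : Measure Ω) [IsProbabilityMeasure μ] (X : ℤ → Ω → F),
    (∀ i, Measurable (X i)) → IsStationaryProcess μ X → procEntropy μ X = 0 →
    measurableWrtOn μ X {i : ℤ | ∃ n ∈ P, (n : ℤ) = i}

/-- Upper density of a set of naturals: limsup_n |Q ∩ {1,…,n}| / n. -/
noncomputable def upperDensity (Q : Set ℕ) : ℝ :=
  Filter.atTop.limsup (fun n : ℕ =>
    (∑ m ∈ Finset.Icc 1 n, Set.indicator Q (fun _ => (1 : ℝ)) m) / n)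

/-- (Q − Q) ∩ ℕ, the set of positive differences of elements of Q, in ℤ. -/
def posDiffs (Q : Set ℕ) : Set ℤ :=
  {d : ℤ | 1 ≤ d ∧ ∃ a ∈ Q, ∃ b ∈ Q, (a : ℤ) - (b : ℤ) = d}

open scoped ENNReal

/-- Every return-time set (for a ppt on a Polish space) contains a set of the
form (Q−Q)∩ℕ, where Q ⊆ ℕ has positive upper density. -/
theorem returnTimeSet_contains_diffSet {Y : Type} [TopologicalSpace Y]
    [PolishSpace Y] [MeasurableSpace Y] [BorelSpace Y]
    (μ : Measure Y) [IsProbabilityMeasure μ] (T : Y → Y)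
    (hT : MeasurePreserving T μ μ) (U : Set Y) (hU : MeasurableSet U)
    (hpos : 0 < μ U) :
    ∃ Q : Set ℕ, 0 < upperDensity Q ∧
      ∀ n : ℕ, (n : ℤ) ∈ posDiffs Q → 0 < μ (U ∩ T^[n] ⁻¹' U) := by
  classical
  set c : ℝ≥0∞ := μ U with hc
  have hcne : c ≠ ∞ := measure_ne_top μ U
  have hc0 : c ≠ 0 := hpos.ne'
  have hUm : ∀ m : ℕ, MeasurableSet (T^[m] ⁻¹' U) := fun m => (hT.iterate m).measurable hU
  set g : ℕ → Y → ℝ≥0∞ := fun N x =>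
    ∑ m ∈ Finset.Icc 1 N, (T^[m] ⁻¹' U).indicator (fun _ => (1 : ℝ≥0∞)) x with hgdef
  have hgmeas : ∀ N, Measurable (g N) := fun N =>
    Finset.measurable_sum _ fun m _ => measurable_const.indicator (hUm m)
  have hgle : ∀ N x, g N x ≤ N := by
    intro N x
    calc g N x ≤ ∑ m ∈ Finset.Icc 1 N, 1 := by
          apply Finset.sum_le_sum; intro m _
          by_cases h : x ∈ T^[m] ⁻¹' U <;> simp [h]
      _ = (N : ℝ≥0∞) := by simp
  have hgint : ∀ N, ∫⁻ x, g N x ∂μ = N * c := by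
    intro N
    rw [hgdef]
    rw [lintegral_finset_sum _ fun m _ => measurable_const.indicator (hUm m)]
    have : ∀ m ∈ Finset.Icc 1 N,
        ∫⁻ x, (T^[m] ⁻¹' U).indicator (fun _ => (1 : ℝ≥0∞)) x ∂μ = c := by
      intro m _
      rw [lintegral_indicator_const (hUm m) 1, one_mul]
      exact (hT.iterate m).measure_preimage hU.nullMeasurableSet
    rw [Finset.sum_congr rfl this]
    simp [mul_comm]
  set A : ℕ → Set Y := fun N => {x | (N : ℝ≥0∞) * (c / 2) ≤ g N x} with hAdef
  have hAmeas : ∀ N, MeasurableSet (A N) := fun N =>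
    measurableSet_le measurable_const (hgmeas N)
  have hAbound : ∀ N : ℕ, 1 ≤ N → c / 2 ≤ μ (A N) := by
    intro N hN
    have hNne : (N : ℝ≥0∞) ≠ 0 := Nat.cast_ne_zero.mpr (by omega)
    have hNtop : (N : ℝ≥0∞) ≠ ∞ := ENNReal.natCast_ne_top N
    have key : (N : ℝ≥0∞) * c ≤ (N : ℝ≥0∞) * (μ (A N) + c / 2) := by
      have h1 : ∫⁻ x in A N, g N x ∂μ ≤ (N : ℝ≥0∞) * μ (A N) := by
        calc ∫⁻ x in A N, g N x ∂μ ≤ ∫⁻ _ in A N, (N : ℝ≥0∞) ∂μ :=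
              lintegral_mono fun x => hgle N x
          _ = (N : ℝ≥0∞) * μ (A N) := setLIntegral_const _ _
      have h2 : ∫⁻ x in (A N)ᶜ, g N x ∂μ ≤ (N : ℝ≥0∞) * (c / 2) := by
        calc ∫⁻ x in (A N)ᶜ, g N x ∂μ ≤ ∫⁻ _ in (A N)ᶜ, (N : ℝ≥0∞) * (c / 2) ∂μ := by
              apply setLIntegral_mono measurable_const
              intro x hx
              exact le_of_not_ge hx
          _ = (N : ℝ≥0∞) * (c / 2) * μ ((A N)ᶜ) := setLIntegral_const _ _
          _ ≤ (N : ℝ≥0∞) * (c / 2) * 1 := by gcongr; exact prob_le_one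
          _ = (N : ℝ≥0∞) * (c / 2) := mul_one _
      calc (N : ℝ≥0∞) * c = ∫⁻ x, g N x ∂μ := (hgint N).symm
        _ = ∫⁻ x in A N, g N x ∂μ + ∫⁻ x in (A N)ᶜ, g N x ∂μ :=
            (lintegral_add_compl _ (hAmeas N)).symm
        _ ≤ (N : ℝ≥0∞) * μ (A N) + (N : ℝ≥0∞) * (c / 2) := add_le_add h1 h2
        _ = (N : ℝ≥0∞) * (μ (A N) + c / 2) := (mul_add _ _ _).symm
    have hcle : c ≤ μ (A N) + c / 2 := by
      exact (ENNReal.mul_le_mul_iff_right hNne hNtop).mp key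
    by_contra hcon
    push_neg at hcon
    have : μ (A N) + c / 2 < c / 2 + c / 2 :=
      ENNReal.add_lt_add_right (by simp [hcne, ENNReal.div_eq_top]) hcon
    rw [ENNReal.add_halves] at this
    exact absurd hcle (not_le.mpr this)
  -- the limsup set
  set C : ℕ → Set Y := fun N => ⋃ n, ⋃ _ : N ≤ n, A n with hCdef
  have hCmeas : ∀ N, MeasurableSet (C N) := fun N =>
    MeasurableSet.iUnion fun n => MeasurableSet.iUnion fun _ => hAmeas n
  have hCanti : Antitone C := by
    intro m n hmn
    apply Set.iUnion₂_subset
    intro k hk y hy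
    exact Set.mem_iUnion₂.mpr ⟨k, hmn.trans hk, hy⟩
  have hCbound : ∀ N, c / 2 ≤ μ (C N) := by
    intro N
    have : A (max N 1) ⊆ C N := fun y hy =>
      Set.mem_iUnion₂.mpr ⟨max N 1, le_max_left _ _, hy⟩
    exact (hAbound _ (le_max_right _ _)).trans (measure_mono this)
  set B : Set Y := ⋂ N, C N with hBdef
  have hBpos : 0 < μ B := by
    have htend : Tendsto (μ ∘ C) atTop (nhds (μ B)) :=
      tendsto_measure_iInter_atTop (fun n => (hCmeas n).nullMeasurableSet) hCanti
        ⟨0, measure_ne_top μ _⟩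
    have hle : c / 2 ≤ μ B := ge_of_tendsto htend (Eventually.of_forall hCbound)
    have : (0 : ℝ≥0∞) < c / 2 := ENNReal.div_pos hc0 (by norm_num)
    exact this.trans_le hle
  -- bad null set
  set D : ℕ × ℕ → Set Y := fun p => T^[p.1] ⁻¹' U ∩ T^[p.2] ⁻¹' U with hDdef
  set Bad : Set Y := ⋃ p : ℕ × ℕ, if μ (D p) = 0 then D p else ∅ with hBaddef
  have hBadnull : μ Bad = 0 := by
    apply measure_iUnion_null
    intro p
    by_cases h : μ (D p) = 0 <;> simp [h]
  have hGpos : 0 < μ (B \ Bad) := by rw [measure_diff_null hBadnull]; exact hBpos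
  obtain ⟨x, hxB, hxBad⟩ := nonempty_of_measure_ne_zero hGpos.ne'
  refine ⟨{n | T^[n] x ∈ U}, ?_, ?_⟩
  · -- positive upper density
    set t : ℝ := (c / 2).toReal with ht
    have htpos : 0 < t := ENNReal.toReal_pos (by simp [hc0]) (by simp [hcne, ENNReal.div_eq_top])
    set f : ℕ → ℝ := fun n =>
      (∑ m ∈ Finset.Icc 1 n, Set.indicator {n | T^[n] x ∈ U} (fun _ => (1 : ℝ)) m) / n with hfdef
    have hind : ∀ m : ℕ, Set.indicator {n | T^[n] x ∈ U} (fun _ => (1 : ℝ)) m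
        = Set.indicator U (fun _ => (1 : ℝ)) (T^[m] x) := by
      intro m
      by_cases h : T^[m] x ∈ U <;> simp [Set.indicator_apply, h]
    have hofReal : ∀ n, ENNReal.ofReal (∑ m ∈ Finset.Icc 1 n,
        Set.indicator {n | T^[n] x ∈ U} (fun _ => (1 : ℝ)) m) = g n x := by
      intro n
      rw [ENNReal.ofReal_sum_of_nonneg (fun m _ => Set.indicator_nonneg (by intros; norm_num) _)]
      apply Finset.sum_congr rfl
      intro m _
      rw [hind m]
      by_cases h : T^[m] x ∈ U <;> simp [Set.indicator_apply, h, Set.mem_preimage]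
    have hsum_nonneg : ∀ n, 0 ≤ ∑ m ∈ Finset.Icc 1 n,
        Set.indicator {n | T^[n] x ∈ U} (fun _ => (1 : ℝ)) m := fun n =>
      Finset.sum_nonneg fun m _ => Set.indicator_nonneg (by intros; norm_num) _
    have hfle : ∀ n, f n ≤ 1 := by
      intro n
      rcases Nat.eq_zero_or_pos n with h0 | hpos'
      · simp [hfdef, h0]
      · rw [hfdef]
        rw [div_le_one (by exact_mod_cast hpos')]
        calc (∑ m ∈ Finset.Icc 1 n, Set.indicator {n | T^[n] x ∈ U} (fun _ => (1 : ℝ)) m)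
            ≤ ∑ m ∈ Finset.Icc 1 n, 1 := Finset.sum_le_sum fun m _ =>
              Set.indicator_le_self' (by intros; norm_num) m
          _ = (n : ℝ) := by simp
    have hfreq : ∃ᶠ n in atTop, t ≤ f n := by
      rw [frequently_atTop]
      intro N
      have hxC : x ∈ C (max N 1) := Set.mem_iInter.mp hxB (max N 1)
      obtain ⟨n, hn, hxn⟩ := Set.mem_iUnion₂.mp hxC
      have hn1 : 1 ≤ n := (le_max_right N 1).trans hn
      refine ⟨n, (le_max_left N 1).trans hn, ?_⟩
      have hxA : (n : ℝ≥0∞) * (c / 2) ≤ g n x := hxn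
      rw [← hofReal n] at hxA
      have := ENNReal.toReal_mono ENNReal.ofReal_ne_top hxA
      rw [ENNReal.toReal_ofReal (hsum_nonneg n), ENNReal.toReal_mul, ENNReal.toReal_natCast]
        at this
      rw [hfdef]
      rw [le_div_iff₀ (by exact_mod_cast hn1)]
      linarith [this]
    have hbound : IsBoundedUnder (· ≤ ·) atTop f :=
      isBoundedUnder_of ⟨1, hfle⟩
    have : t ≤ Filter.atTop.limsup f := le_limsup_of_frequently_le hfreq hbound
    have heq : upperDensity {n | T^[n] x ∈ U} = Filter.atTop.limsup f := rfl
    rw [heq]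
    linarith
  · -- difference set property
    intro n hn
    obtain ⟨hn1, a, ha, b, hb, hab⟩ := hn
    have han : a = n + b := by omega
    have hxD : x ∈ D (a, b) := ⟨ha, hb⟩
    have hDne : μ (D (a, b)) ≠ 0 := by
      intro h0
      apply hxBad
      rw [hBaddef]
      exact Set.mem_iUnion.mpr ⟨(a, b), by rw [if_pos h0]; exact hxD⟩
    have hDeq : D (a, b) = T^[b] ⁻¹' (T^[n] ⁻¹' U ∩ U) := by
      rw [hDdef]
      ext y
      simp only [Set.mem_inter_iff, Set.mem_preimage, han, Function.iterate_add_apply]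
    have : μ (D (a, b)) = μ (T^[n] ⁻¹' U ∩ U) := by
      rw [hDeq]
      exact (hT.iterate b).measure_preimage ((hUm n).inter hU).nullMeasurableSet
    rw [Set.inter_comm]
    rw [this] at hDne
    exact pos_iff_ne_zero.mpr hDne
end

section
/- For integers k ≥ 2 and 1 ≤ r ≤ k−1, the arithmetic progression kℕ + r is not a predictive set: there exists a finite-valued stationary process of zero entropy with H(X_0 | X_p : p ∈ kℕ+r) = log 2. -/
open MeasureTheory Filter

section AuxEntropy

open scoped ENNReal

lemma aux_negMulLog_le_one {x : ℝ} (h0 : 0 ≤ x) (h1 : x ≤ 1) : Real.negMulLog x ≤ 1 := by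
  rcases eq_or_lt_of_le h0 with h | h
  · simp [← h]
  · have hlog : Real.log x⁻¹ ≤ x⁻¹ - 1 := Real.log_le_sub_one_of_pos (by positivity)
    have hx : Real.negMulLog x = x * Real.log x⁻¹ := by
      rw [Real.log_inv, Real.negMulLog]; ring
    calc Real.negMulLog x = x * Real.log x⁻¹ := hx
      _ ≤ x * (x⁻¹ - 1) := mul_le_mul_of_nonneg_left hlog h0
      _ = 1 - x := by field_simp
      _ ≤ 1 := by linarith

lemma count_fiber_eq {Ω G : Type} [MeasurableSpace Ω] [MeasurableSingletonClass Ω]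
    [AddCommGroup Ω] [AddCommGroup G]
    (φ : Ω →+ G) (hφ : Function.Surjective φ) (g : G) :
    Measure.count (φ ⁻¹' {g}) = Measure.count (φ ⁻¹' {0}) := by
  obtain ⟨ω₀, hω₀⟩ := hφ g
  have himg : (fun x => x + ω₀) '' (φ ⁻¹' {0}) = φ ⁻¹' {g} := by
    ext x
    simp only [Set.mem_image, Set.mem_preimage, Set.mem_singleton_iff]
    constructor
    · rintro ⟨y, hy, rfl⟩; simp [map_add, hy, hω₀]
    · intro hx; exact ⟨x - ω₀, by simp [map_sub, hx, hω₀], by simp⟩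
  rw [← himg, Measure.count_injective_image (add_left_injective ω₀)]

lemma unif_fiber {Ω G : Type} [MeasurableSpace Ω] [MeasurableSingletonClass Ω]
    [Fintype Ω] [Nonempty Ω] [AddCommGroup Ω] [Fintype G] [AddCommGroup G]
    (hms : ∀ s : Set Ω, MeasurableSet s)
    (φ : Ω →+ G) (hφ : Function.Surjective φ) (g : G) :
    ((Fintype.card Ω : ℝ≥0∞)⁻¹ • Measure.count : Measure Ω) (φ ⁻¹' {g})
      = (Fintype.card G : ℝ≥0∞)⁻¹ := by
  haveI : Nonempty G := Nonempty.map φ ‹_›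
  set μ : Measure Ω := (Fintype.card Ω : ℝ≥0∞)⁻¹ • Measure.count with hμ
  have hconst : ∀ g' : G, μ (φ ⁻¹' {g'}) = μ (φ ⁻¹' {0}) := fun g' => by
    simp only [hμ, Measure.smul_apply, smul_eq_mul, count_fiber_eq φ hφ]
  have hcover : (⋃ g' : G, φ ⁻¹' {g'}) = Set.univ := by
    ext x; simp
  have hdisj : Pairwise (Function.onFun Disjoint (fun g' : G => φ ⁻¹' {g'})) := by
    intro a b hab
    simp only [Function.onFun, Set.disjoint_left]
    rintro x hx hx'
    simp only [Set.mem_preimage, Set.mem_singleton_iff] at hx hx'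
    exact hab (by rw [← hx, ← hx'])
  have hm1 : μ Set.univ = 1 := by
    rw [hμ]
    simp only [Measure.smul_apply, smul_eq_mul,
      Measure.count_apply_finite _ Set.finite_univ]
    rw [Set.Finite.toFinset_univ, Finset.card_univ]
    exact ENNReal.inv_mul_cancel (by exact_mod_cast Fintype.card_ne_zero)
      (ENNReal.natCast_ne_top _)
  have hsum : ∑ g' : G, μ (φ ⁻¹' {g'}) = 1 := by
    rw [← tsum_fintype (L := SummationFilter.unconditional _), ← measure_iUnion hdisj (fun _ => hms _), hcover, hm1]
  have hG0 : (Fintype.card G : ℝ≥0∞) * μ (φ ⁻¹' {0}) = 1 := by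
    rw [← hsum]
    simp [hconst, Finset.sum_const, nsmul_eq_mul]
  have hcardG : (Fintype.card G : ℝ≥0∞) ≠ 0 := by exact_mod_cast Fintype.card_ne_zero
  have hfin : μ (φ ⁻¹' {0}) = (Fintype.card G : ℝ≥0∞)⁻¹ := by
    have h2 := congrArg (fun x => (Fintype.card G : ℝ≥0∞)⁻¹ * x) hG0
    simpa [← mul_assoc, ENNReal.inv_mul_cancel hcardG (ENNReal.natCast_ne_top _)] using h2
  rw [hconst g, hfin]

lemma shannon_uniform {Ω G : Type} [MeasurableSpace Ω] [Fintype G] [Nonempty G]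
    (μ : Measure Ω) (Y : Ω → G)
    (h : ∀ g, μ (Y ⁻¹' {g}) = (Fintype.card G : ℝ≥0∞)⁻¹) :
    shannonEntropy μ Y = Real.log (Fintype.card G) := by
  have hcard : (0:ℝ) < Fintype.card G := by exact_mod_cast Fintype.card_pos
  unfold shannonEntropy
  have hterm : ∀ g : G, Real.negMulLog ((μ (Y ⁻¹' {g})).toReal)
      = (Fintype.card G : ℝ)⁻¹ * Real.log (Fintype.card G) := by
    intro g
    rw [h g, ENNReal.toReal_inv, ENNReal.toReal_natCast, Real.negMulLog, Real.log_inv]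
    ring
  rw [Finset.sum_congr rfl (fun g _ => hterm g), Finset.sum_const, nsmul_eq_mul,
    Finset.card_univ]
  field_simp

lemma shannon_comp_inj {Ω G G' : Type} [MeasurableSpace Ω] [Fintype G] [Fintype G']
    (μ : Measure Ω) (Y : Ω → G) (ι : G → G') (hι : Function.Injective ι) :
    shannonEntropy μ (fun ω => ι (Y ω)) = shannonEntropy μ Y := by
  classical
  unfold shannonEntropy
  have hvanish : ∀ y ∈ Finset.univ, y ∉ Finset.univ.image ι →
      Real.negMulLog ((μ ((fun ω => ι (Y ω)) ⁻¹' {y})).toReal) = 0 := by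
    intro y _ hy
    have hpre : (fun ω => ι (Y ω)) ⁻¹' {y} = ∅ := by
      ext ω
      simp only [Set.mem_preimage, Set.mem_singleton_iff, Set.mem_empty_iff_false, iff_false]
      intro hc
      exact hy (Finset.mem_image.mpr ⟨Y ω, Finset.mem_univ _, hc⟩)
    simp [hpre]
  rw [← Finset.sum_subset (Finset.subset_univ (Finset.univ.image ι)) hvanish,
    Finset.sum_image (fun a _ b _ h => hι h)]
  apply Finset.sum_congr rfl
  intro g _
  have hpre : (fun ω => ι (Y ω)) ⁻¹' {ι g} = Y ⁻¹' {g} := by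
    ext ω; simp [hι.eq_iff]
  rw [hpre]

lemma toReal_prob_le_one {Ω : Type} [MeasurableSpace Ω] (μ : Measure Ω)
    [IsProbabilityMeasure μ] (s : Set Ω) : (μ s).toReal ≤ 1 := by
  have h : μ s ≤ 1 := prob_le_one
  have := ENNReal.toReal_mono ENNReal.one_ne_top h
  simpa using this

lemma shannon_nonneg {Ω G : Type} [MeasurableSpace Ω] [Fintype G] (μ : Measure Ω)
    [IsProbabilityMeasure μ] (Y : Ω → G) : 0 ≤ shannonEntropy μ Y :=
  Finset.sum_nonneg fun g _ => Real.negMulLog_nonneg ENNReal.toReal_nonneg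
    (toReal_prob_le_one μ _)

lemma shannon_le_card {Ω G : Type} [MeasurableSpace Ω] [Fintype Ω] [Fintype G]
    (μ : Measure Ω) [IsProbabilityMeasure μ] (Y : Ω → G) :
    shannonEntropy μ Y ≤ Fintype.card Ω := by
  classical
  unfold shannonEntropy
  have hvanish : ∀ y ∈ Finset.univ, y ∉ Finset.univ.image Y →
      Real.negMulLog ((μ (Y ⁻¹' {y})).toReal) = 0 := by
    intro y _ hy
    have hpre : Y ⁻¹' {y} = ∅ := by
      ext ω
      simp only [Set.mem_preimage, Set.mem_singleton_iff, Set.mem_empty_iff_false, iff_false]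
      intro hc
      exact hy (Finset.mem_image.mpr ⟨ω, Finset.mem_univ _, hc⟩)
    simp [hpre]
  calc ∑ y : G, Real.negMulLog ((μ (Y ⁻¹' {y})).toReal)
      = ∑ y ∈ Finset.univ.image Y, Real.negMulLog ((μ (Y ⁻¹' {y})).toReal) :=
        (Finset.sum_subset (Finset.subset_univ _) hvanish).symm
    _ ≤ ∑ _y ∈ Finset.univ.image Y, (1:ℝ) := by
        apply Finset.sum_le_sum
        intro y _
        exact aux_negMulLog_le_one ENNReal.toReal_nonneg (toReal_prob_le_one μ _)
    _ = ((Finset.univ.image Y).card : ℝ) := by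
        rw [Finset.sum_const, nsmul_eq_mul, mul_one]
    _ ≤ Fintype.card Ω := by
        have h1 : (Finset.univ.image Y).card ≤ Fintype.card Ω := by
          exact Finset.card_image_le.trans (le_of_eq Finset.card_univ)
        exact_mod_cast h1

lemma proc_zero {Ω F : Type} [MeasurableSpace Ω] [Fintype Ω] [Fintype F]
    (μ : Measure Ω) [IsProbabilityMeasure μ] (X : ℤ → Ω → F) :
    procEntropy μ X = 0 := by
  have h0 : ∀ n : ℕ, 0 ≤ jointEntropy μ X (Finset.Icc 1 (n:ℤ)) / n := fun n =>
    div_nonneg (shannon_nonneg _ _) (Nat.cast_nonneg n)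
  have hub : ∀ n : ℕ, jointEntropy μ X (Finset.Icc 1 (n:ℤ)) / n
      ≤ (Fintype.card Ω : ℝ) / n := by
    intro n
    rcases Nat.eq_zero_or_pos n with rfl | hn
    · simp
    · unfold jointEntropy
      gcongr
      · exact shannon_le_card μ _
  have hlim : Tendsto (fun n : ℕ => jointEntropy μ X (Finset.Icc 1 (n:ℤ)) / n)
      atTop (nhds 0) :=
    tendsto_of_tendsto_of_tendsto_of_le_of_le tendsto_const_nhds
      (tendsto_const_div_atTop_nhds_zero_nat _) h0 hub
  exact hlim.limsup_eq

def phiHom (k : ℕ) (e : ZMod k) : (ZMod k × (ZMod k → ZMod 2)) →+ (ZMod k × ZMod 2) :=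
  AddMonoidHom.mk' (fun ω => (ω.1, ω.2 e)) (fun _ _ => rfl)

def vHom (k : ℕ) (e : ZMod k) : (ZMod k × (ZMod k → ZMod 2)) →+ (ZMod k × ZMod 2 × ZMod 2) :=
  AddMonoidHom.mk' (fun ω => (ω.1, ω.2 0, ω.2 e)) (fun _ _ => rfl)

end AuxEntropy

open scoped ENNReal in
/-- For k ≥ 2 and 1 ≤ r ≤ k−1, the arithmetic progression kℕ + r is not
predictive: there is a finite-valued zero-entropy stationary process with
H(X_0 | X_p : p ∈ kℕ+r) = log 2. -/
theorem arithmeticProgression_not_predictive (k r : ℕ) (hk : 2 ≤ k)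
    (hr1 : 1 ≤ r) (hr2 : r ≤ k - 1) :
    ∃ (Ω F : Type) (_ : MeasurableSpace Ω) (_ : MeasurableSpace F)
      (_ : Fintype F) (μ : Measure Ω) (_ : IsProbabilityMeasure μ)
      (X : ℤ → Ω → F),
      (∀ i, Measurable (X i)) ∧ IsStationaryProcess μ X ∧
      procEntropy μ X = 0 ∧
      condEntropyOn μ X {i : ℤ | ∃ n : ℕ, 1 ≤ n ∧ (k : ℤ) * n + r = i}
        = Real.log 2 := by
  classical
  haveI : NeZero k := ⟨by omega⟩
  haveI : Nonempty (ZMod k) := ⟨0⟩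
  letI : MeasurableSpace (ZMod k × (ZMod k → ZMod 2)) := ⊤
  letI : MeasurableSpace (ZMod k × ZMod 2) := ⊤
  haveI hsc : MeasurableSingletonClass (ZMod k × (ZMod k → ZMod 2)) := ⟨fun _ => trivial⟩
  have hms : ∀ s : Set (ZMod k × (ZMod k → ZMod 2)), MeasurableSet s := fun _ => trivial
  set S : Set ℤ := {i : ℤ | ∃ n : ℕ, 1 ≤ n ∧ (k : ℤ) * n + r = i} with hSdef
  set rb : ZMod k := (r : ZMod k) with hrb
  have hrb0 : rb ≠ 0 := by
    rw [hrb, Ne, ZMod.natCast_eq_zero_iff]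
    intro hd
    have := Nat.le_of_dvd (by omega) hd
    omega
  set μ : Measure (ZMod k × (ZMod k → ZMod 2)) :=
    (Fintype.card (ZMod k × (ZMod k → ZMod 2)) : ℝ≥0∞)⁻¹ • Measure.count with hμdef
  haveI hprob : IsProbabilityMeasure μ := by
    constructor
    rw [hμdef, Measure.smul_apply, smul_eq_mul,
      Measure.count_apply_finite _ Set.finite_univ,
      Set.Finite.toFinset_univ, Finset.card_univ]
    exact ENNReal.inv_mul_cancel (by exact_mod_cast Fintype.card_ne_zero)
      (ENNReal.natCast_ne_top _)
  set X : ℤ → (ZMod k × (ZMod k → ZMod 2)) → (ZMod k × ZMod 2) :=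
    fun i ω => (ω.1 + (i : ZMod k), ω.2 (i : ZMod k)) with hXdef
  -- facts about S
  have hcastS : ∀ i : ℤ, i ∈ S → ((i : ZMod k)) = rb := by
    rintro i ⟨n, hn1, rfl⟩
    push_cast
    simp [ZMod.natCast_self]
    exact hrb.symm
  have hSne0 : ∀ i : ℤ, i ∈ S → i ≠ 0 := by
    rintro i ⟨n, hn1, rfl⟩
    have h2 : (2:ℤ) ≤ (k:ℤ) := by exact_mod_cast hk
    have hn : (1:ℤ) ≤ (n:ℤ) := by exact_mod_cast hn1
    have hr : (1:ℤ) ≤ (r:ℤ) := by exact_mod_cast hr1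
    nlinarith
  -- stationarity
  have hstat : IsStationaryProcess μ X := by
    intro c n t s
    set cb : ZMod k := ((c : ℤ) : ZMod k) with hcb
    set e : (ZMod k × (ZMod k → ZMod 2)) ≃ (ZMod k × (ZMod k → ZMod 2)) :=
      { toFun := fun ω => (ω.1 + cb, fun j => ω.2 (j + cb))
        invFun := fun ω => (ω.1 - cb, fun j => ω.2 (j - cb))
        left_inv := fun ω => by
          obtain ⟨z, f⟩ := ω
          simp only [add_sub_cancel_right, sub_add_cancel]
        right_inv := fun ω => by
          obtain ⟨z, f⟩ := ω
          simp only [sub_add_cancel, add_sub_cancel_right] } with he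
    have hμe : ∀ A : Set (ZMod k × (ZMod k → ZMod 2)), μ ((e : _ → _) ⁻¹' A) = μ A := by
      intro A
      have h1 : (e : _ → _) ⁻¹' A = e.symm '' A := by
        rw [Equiv.image_eq_preimage_symm]
        simp
      rw [hμdef]
      simp only [Measure.smul_apply, smul_eq_mul, h1,
        Measure.count_injective_image e.symm.injective]
    have hXc : ∀ (i : ℤ) (ω), X (i + c) ω = X i (e ω) := by
      intro i ω
      have hcast : ((i + c : ℤ) : ZMod k) = (i : ZMod k) + cb := by
        rw [hcb]; push_cast; ring
      simp only [hXdef, he, Equiv.coe_fn_mk]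
      rw [hcast]
      refine Prod.ext_iff.mpr ⟨?_, ?_⟩
      · simp only; ring
      · simp only
    have hseteq : (⋂ j, X (t j + c) ⁻¹' s j) = (e : _ → _) ⁻¹' (⋂ j, X (t j) ⁻¹' s j) := by
      rw [Set.preimage_iInter]
      apply Set.iInter_congr
      intro j
      ext ω
      simp only [Set.mem_preimage]
      rw [hXc (t j) ω]
    rw [hseteq, hμe]
  -- surjectivity of the homs
  have hφsurj : ∀ e : ZMod k, Function.Surjective (phiHom k e) := by
    rintro e ⟨z, b⟩
    exact ⟨(z, fun _ => b), rfl⟩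
  have hVsurj : Function.Surjective (vHom k rb) := by
    rintro ⟨z, a, b⟩
    refine ⟨(z, fun i => if i = 0 then a else b), ?_⟩
    simp [vHom, hrb0]
  have hφunif : ∀ e : ZMod k, ∀ g, μ ((phiHom k e) ⁻¹' {g})
      = (Fintype.card (ZMod k × ZMod 2) : ℝ≥0∞)⁻¹ := by
    intro e g
    rw [hμdef]
    exact unif_fiber hms (phiHom k e) (hφsurj e) g
  have hVunif : ∀ g, μ ((vHom k rb) ⁻¹' {g})
      = (Fintype.card (ZMod k × ZMod 2 × ZMod 2) : ℝ≥0∞)⁻¹ := by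
    intro g
    rw [hμdef]
    exact unif_fiber hms (vHom k rb) hVsurj g
  -- joint entropy over a nonempty finite subset of S
  have hJoint_s : ∀ s : Finset ℤ, (↑s ⊆ S) → s.Nonempty →
      jointEntropy μ X s = Real.log (Fintype.card (ZMod k × ZMod 2)) := by
    intro s hsS hne
    obtain ⟨i₀, hi₀⟩ := hne
    set ι : (ZMod k × ZMod 2) → ({x // x ∈ s} → ZMod k × ZMod 2) :=
      fun p => (fun _ => (p.1 + rb, p.2)) with hιdef
    have hinj : Function.Injective ι := by
      intro p q h
      have h0 := congrFun h (⟨i₀, hi₀⟩ : {x // x ∈ s})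
      simp only [hιdef, Prod.mk.injEq] at h0
      exact Prod.ext_iff.mpr ⟨add_right_cancel h0.1, h0.2⟩
    have hfun : (fun ω (i : s) => X i ω) = fun ω => ι ((phiHom k rb) ω) := by
      funext ω
      funext i
      have hcast : ((i : ℤ) : ZMod k) = rb := hcastS i (hsS i.2)
      simp only [hXdef, hιdef, phiHom, AddMonoidHom.mk'_apply, hcast]
    unfold jointEntropy
    rw [hfun, shannon_comp_inj μ (phiHom k rb) ι hinj, shannon_uniform μ _ (hφunif rb)]
  -- joint entropy over insert 0 s, s nonempty subset of S
  have hJoint_ins : ∀ s : Finset ℤ, (↑s ⊆ S) → s.Nonempty →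
      jointEntropy μ X (insert 0 s)
        = Real.log (Fintype.card (ZMod k × ZMod 2 × ZMod 2)) := by
    intro s hsS hne
    obtain ⟨i₀, hi₀⟩ := hne
    have hi₀0 : i₀ ≠ 0 := hSne0 i₀ (hsS hi₀)
    set ι : (ZMod k × ZMod 2 × ZMod 2) → ({x // x ∈ insert (0:ℤ) s} → ZMod k × ZMod 2) :=
      fun q => (fun i => if (i : ℤ) = 0 then (q.1, q.2.1) else (q.1 + rb, q.2.2)) with hιdef
    have hinj : Function.Injective ι := by
      intro p q h
      have h0 := congrFun h (⟨0, Finset.mem_insert_self 0 s⟩ : {x // x ∈ insert (0:ℤ) s})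
      have h1 := congrFun h (⟨i₀, Finset.mem_insert_of_mem hi₀⟩ : {x // x ∈ insert (0:ℤ) s})
      simp only [hιdef, if_pos rfl, Prod.mk.injEq] at h0
      simp only [hιdef, if_neg hi₀0, Prod.mk.injEq] at h1
      exact Prod.ext_iff.mpr ⟨h0.1, Prod.ext_iff.mpr ⟨h0.2, h1.2⟩⟩
    have hfun : (fun ω (i : (insert (0:ℤ) s : Finset ℤ)) => X i ω)
        = fun ω => ι ((vHom k rb) ω) := by
      funext ω
      funext i
      by_cases hc : (i : ℤ) = 0
      · simp only [hιdef, if_pos hc, hXdef, vHom, AddMonoidHom.mk'_apply, hc]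
        simp
      · have hiS : (i : ℤ) ∈ s := by
          rcases Finset.mem_insert.mp i.2 with h | h
          · exact absurd h hc
          · exact h
        have hcast : ((i : ℤ) : ZMod k) = rb := hcastS i (hsS hiS)
        simp only [hιdef, if_neg hc, hXdef, vHom, AddMonoidHom.mk'_apply, hcast]
    unfold jointEntropy
    rw [hfun, shannon_comp_inj μ (vHom k rb) ι hinj, shannon_uniform μ _ hVunif]
  -- joint entropy over {0}
  have hJoint0 : jointEntropy μ X {0} = Real.log (Fintype.card (ZMod k × ZMod 2)) := by
    set ι : (ZMod k × ZMod 2) → ({x // x ∈ ({0} : Finset ℤ)} → ZMod k × ZMod 2) :=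
      fun p => (fun _ => p) with hιdef
    have hinj : Function.Injective ι := by
      intro p q h
      exact congrFun h (⟨0, Finset.mem_singleton_self 0⟩ : {x // x ∈ ({0} : Finset ℤ)})
    have hfun : (fun ω (i : (({0}:Finset ℤ) : Finset ℤ)) => X i ω)
        = fun ω => ι ((phiHom k 0) ω) := by
      funext ω
      funext i
      have hc : (i : ℤ) = 0 := Finset.mem_singleton.mp i.2
      simp only [hιdef, hXdef, phiHom, AddMonoidHom.mk'_apply, hc]
      simp
    unfold jointEntropy
    rw [hfun, shannon_comp_inj μ (phiHom k 0) ι hinj, shannon_uniform μ _ (hφunif 0)]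
  -- joint entropy over ∅
  have hJoint_empty : jointEntropy μ X ∅ = 0 := by
    unfold jointEntropy shannonEntropy
    apply Finset.sum_eq_zero
    intro y _
    have hpre : (fun ω (i : ((∅:Finset ℤ) : Finset ℤ)) => X i ω) ⁻¹' {y} = Set.univ := by
      ext ω
      simp only [Set.mem_preimage, Set.mem_singleton_iff, Set.mem_univ, iff_true]
      funext i
      exact absurd i.2 (Finset.notMem_empty _)
    rw [hpre]
    simp
  -- the value for nonempty subsets is exactly log 2
  have hcard2 : (0:ℝ) < (Fintype.card (ZMod k × ZMod 2) : ℝ) := by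
    exact_mod_cast Fintype.card_pos
  have hvalne : ∀ (s : Finset ℤ), (↑s ⊆ S) → s.Nonempty →
      jointEntropy μ X (insert 0 s) - jointEntropy μ X s = Real.log 2 := by
    intro s h1 h2
    rw [hJoint_ins s h1 h2, hJoint_s s h1 h2]
    have c1 : (Fintype.card (ZMod k × ZMod 2 × ZMod 2) : ℝ)
        = 2 * (Fintype.card (ZMod k × ZMod 2) : ℝ) := by
      simp [Fintype.card_prod, ZMod.card]
      ring
    rw [c1, Real.log_mul two_ne_zero (ne_of_gt hcard2)]
    ring
  -- value for the empty subset
  have hval0 : Real.log 2 ≤ jointEntropy μ X (insert 0 (∅ : Finset ℤ))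
      - jointEntropy μ X ∅ := by
    have hins : (insert (0:ℤ) (∅:Finset ℤ)) = ({0} : Finset ℤ) := rfl
    rw [hins, hJoint0, hJoint_empty, sub_zero]
    apply Real.log_le_log two_pos
    have : (2:ℕ) ≤ Fintype.card (ZMod k × ZMod 2) := by
      rw [Fintype.card_prod, ZMod.card, ZMod.card]
      omega
    exact_mod_cast this
  -- lower bound for all subsets
  have hlb : ∀ p : {s : Finset ℤ // ↑s ⊆ S},
      Real.log 2 ≤ jointEntropy μ X (insert 0 p.1) - jointEntropy μ X p.1 := by
    rintro ⟨s, hs⟩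
    rcases s.eq_empty_or_nonempty with rfl | hne
    · exact hval0
    · exact (hvalne s hs hne).ge
  have hmem : ((({(k:ℤ) + r} : Finset ℤ) : Set ℤ) ⊆ S) := by
    intro i hi
    simp only [Finset.coe_singleton, Set.mem_singleton_iff] at hi
    subst hi
    exact ⟨1, le_refl 1, by push_cast; ring⟩
  haveI : Nonempty {s : Finset ℤ // (↑s : Set ℤ) ⊆ S} := ⟨⟨∅, by simp⟩⟩
  have hcond : condEntropyOn μ X S = Real.log 2 := by
    unfold condEntropyOn
    apply le_antisymm
    · have hle := ciInf_le (f := fun p : {s : Finset ℤ // ↑s ⊆ S} =>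
          jointEntropy μ X (insert 0 p.1) - jointEntropy μ X p.1)
        ⟨Real.log 2, by rintro x ⟨p, rfl⟩; exact hlb p⟩ ⟨{(k:ℤ) + r}, hmem⟩
      refine hle.trans ?_
      rw [hvalne _ hmem ⟨(k:ℤ) + r, Finset.mem_singleton_self _⟩]
    · exact le_ciInf hlb
  exact ⟨ZMod k × (ZMod k → ZMod 2), ZMod k × ZMod 2, inferInstance, inferInstance,
    inferInstance, μ, hprob, X, fun i => measurable_from_top, hstat,
    proc_zero μ X, hcond⟩
end

section
/- If P is a return-time set, then the set of integers n ∈ ℤ such that P + n contains a return-time set has bounded gaps. -/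
open MeasureTheory
open scoped ENNReal

/-- A ⊆ ℕ is a return-time set: A = N(U,U) = {n ≥ 1 : μ(U ∩ T⁻ⁿU) > 0} for
some probability preserving transformation (Y,μ,T) and U with μ(U) > 0. -/
def IsReturnTimeSet (A : Set ℕ) : Prop :=
  ∃ (Y : Type) (_ : MeasurableSpace Y) (μ : Measure Y)
    (_ : IsProbabilityMeasure μ) (T : Y → Y) (U : Set Y),
    MeasurePreserving T μ μ ∧ MeasurableSet U ∧ 0 < μ U ∧
    A = {n : ℕ | 1 ≤ n ∧ 0 < μ (U ∩ T^[n] ⁻¹' U)}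

private lemma iterate_preimage_shift {Y : Type} [MeasurableSpace Y] {μ : Measure Y} {T : Y → Y}
    (hT : MeasurePreserving T μ μ) {U : Set Y} (hU : MeasurableSet U) (b d : ℕ) :
    μ (T^[b] ⁻¹' U ∩ T^[b + d] ⁻¹' U) = μ (U ∩ T^[d] ⁻¹' U) := by
  have h1 : T^[b + d] ⁻¹' U = T^[b] ⁻¹' (T^[d] ⁻¹' U) := by
    rw [add_comm, Function.iterate_add, Set.preimage_comp]
  rw [h1, ← Set.preimage_inter]
  exact (hT.iterate b).measure_preimage
    ((hU.inter ((hT.iterate d).measurable hU)).nullMeasurableSet)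

/-- Return-time sets are syndetic with a uniform bound. -/
private lemma syndetic_aux {Y : Type} [MeasurableSpace Y] (μ : Measure Y)
    [IsProbabilityMeasure μ] (T : Y → Y) (U : Set Y) (hT : MeasurePreserving T μ μ)
    (hU : MeasurableSet U) (hU0 : 0 < μ U) :
    ∃ L : ℕ, 0 < L ∧ ∀ r : ℕ, ∃ k : ℕ, r < k ∧ k ≤ r + L ∧ 0 < μ (U ∩ T^[k] ⁻¹' U) := by
  by_contra hcon
  push_neg at hcon
  -- gap-choosing function
  have hcon' : ∀ x : ℕ, ∃ r : ℕ, ∀ k : ℕ, r < k → k ≤ r + (x + 1) →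
      μ (U ∩ T^[k] ⁻¹' U) = 0 := by
    intro x
    obtain ⟨r, hr⟩ := hcon (x + 1) (Nat.succ_pos x)
    exact ⟨r, fun k h1 h2 => le_zero_iff.mp (hr k h1 h2)⟩
  choose g hg using hcon'
  -- recursive sequence with all differences outside the return-time set
  let b : ℕ → ℕ := fun j => Nat.rec 0 (fun _ p => g p + p + 1) j
  have hb_succ : ∀ j, b (j + 1) = g (b j) + b j + 1 := fun j => rfl
  have hmono : Monotone b := monotone_nat_of_le_succ (fun j => by rw [hb_succ]; omega)
  have hdiff : ∀ i j : ℕ, i < j → μ (U ∩ T^[b j - b i] ⁻¹' U) = 0 ∧ b i < b j := by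
    intro i j hij
    obtain ⟨j', rfl⟩ : ∃ j', j = j' + 1 := ⟨j - 1, by omega⟩
    have h1 : b i ≤ b j' := hmono (by omega)
    have h2 : b (j' + 1) = g (b j') + b j' + 1 := rfl
    constructor
    · exact hg (b j') _ (by omega) (by omega)
    · omega
  -- choose K with 1 < K * μ U
  have hμfin : μ U ≠ ⊤ := measure_ne_top μ U
  have hdivfin : (1 : ℝ≥0∞) / μ U ≠ ⊤ := by
    simp [ENNReal.div_eq_top, hU0.ne']
  obtain ⟨K, hK⟩ := ENNReal.exists_nat_gt hdivfin
  have h1K : 1 < (K : ℝ≥0∞) * μ U := by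
    calc (1 : ℝ≥0∞) = 1 / μ U * μ U := (ENNReal.div_mul_cancel hU0.ne' hμfin).symm
    _ < (K : ℝ≥0∞) * μ U := ENNReal.mul_lt_mul_left hU0.ne' hμfin hK
  -- K pairwise a.e.-disjoint preimages of U
  set s : Fin K → Set Y := fun i => T^[b i] ⁻¹' U with hs
  have hmeas_s : ∀ i, MeasurableSet (s i) := fun i => (hT.iterate _).measurable hU
  have hsi : ∀ i, μ (s i) = μ U := fun i =>
    (hT.iterate _).measure_preimage hU.nullMeasurableSet
  have key : ∀ i j : Fin K, (i : ℕ) < (j : ℕ) → AEDisjoint μ (s i) (s j) := by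
    intro i j hij
    obtain ⟨hd0, hdlt⟩ := hdiff i j hij
    show μ (s i ∩ s j) = 0
    have hbj : b (j : ℕ) = b (i : ℕ) + (b (j : ℕ) - b (i : ℕ)) := by omega
    rw [hs]
    simp only
    rw [show T^[b (j : ℕ)] ⁻¹' U = T^[b (i : ℕ) + (b (j : ℕ) - b (i : ℕ))] ⁻¹' U from by
      rw [← hbj]]
    rw [iterate_preimage_shift hT hU]
    exact hd0
  have hdisj : Pairwise (Function.onFun (AEDisjoint μ) s) := by
    intro i j hij
    rcases lt_or_gt_of_ne hij with h | h
    · exact key i j h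
    · exact (key j i h).symm
  have hunion : μ (⋃ i, s i) = ∑' i : Fin K, μ (s i) :=
    measure_iUnion₀ hdisj (fun i => (hmeas_s i).nullMeasurableSet)
  have hsum : ∑' i : Fin K, μ (s i) = (K : ℝ≥0∞) * μ U := by
    rw [tsum_fintype]
    simp [hsi, Finset.sum_const, nsmul_eq_mul]
  have hle : μ (⋃ i, s i) ≤ 1 := prob_le_one
  rw [hunion, hsum] at hle
  exact absurd h1K (not_lt.mpr hle)

/-- Positive shifts: if t is a return time, some return-time set is ⊆ P + t. -/
private lemma exists_pos_shift {Y : Type} [MeasurableSpace Y] (μ : Measure Y)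
    [IsProbabilityMeasure μ] (T : Y → Y) (U : Set Y) (hT : MeasurePreserving T μ μ)
    (hU : MeasurableSet U) {t : ℕ} (ht : 0 < μ (U ∩ T^[t] ⁻¹' U)) :
    ∃ A : Set ℕ, IsReturnTimeSet A ∧
      ∀ a ∈ A, ∃ p : ℕ, (1 ≤ p ∧ 0 < μ (U ∩ T^[p] ⁻¹' U)) ∧ (a : ℤ) = (p : ℤ) + t := by
  classical
  letI mZ : MeasurableSpace (ZMod (t + 1)) := ⊤
  haveI : MeasurableSingletonClass (ZMod (t + 1)) := ⟨fun _ => trivial⟩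
  set c : ℝ≥0∞ := ((t + 1 : ℕ) : ℝ≥0∞)⁻¹ with hc
  have hcne : c ≠ 0 := ENNReal.inv_ne_zero.mpr (ENNReal.natCast_ne_top _)
  set ν : Measure (ZMod (t + 1)) := c • Measure.count with hν
  haveI hνprob : IsProbabilityMeasure ν := by
    constructor
    rw [hν, Measure.smul_apply, Measure.count_univ, ENat.card_eq_coe_fintype_card, ENat.toENNReal_coe, ZMod.card, smul_eq_mul, hc]
    exact ENNReal.inv_mul_cancel (by exact_mod_cast Nat.succ_ne_zero t)
      (ENNReal.natCast_ne_top _)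
  set e : ZMod (t + 1) → ZMod (t + 1) := fun x => x + 1 with he_def
  have he_meas : Measurable e := measurable_from_top
  have hcount : ∀ s : Set (ZMod (t + 1)), Measure.count (e ⁻¹' s) = Measure.count s := by
    intro s
    have hinj : Function.Injective (fun y : ZMod (t + 1) => y - 1) := by
      intro a b hab
      have := congrArg (fun z => z + 1) hab
      simpa using this
    have himg : e ⁻¹' s = (fun y => y - 1) '' s := by
      ext x
      constructor
      · intro hx
        exact ⟨x + 1, hx, by simp⟩
      · rintro ⟨y, hy, rfl⟩
        simpa [he_def] using hy
    rw [himg, Measure.count_injective_image hinj]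
  have he : MeasurePreserving e ν ν := by
    refine ⟨he_meas, ?_⟩
    ext s hsm
    rw [Measure.map_apply he_meas hsm, hν, Measure.smul_apply, Measure.smul_apply,
      smul_eq_mul, smul_eq_mul, hcount]
  set V : Set Y := U ∩ T^[t] ⁻¹' U with hVdef
  have hVmeas : MeasurableSet V := hU.inter ((hT.iterate t).measurable hU)
  set W : Set (Y × ZMod (t + 1)) := V ×ˢ ({0} : Set (ZMod (t + 1))) with hWdef
  set μ' : Measure (Y × ZMod (t + 1)) := μ.prod ν with hμ'
  have hT' : MeasurePreserving (Prod.map T e) μ' μ' := hT.prod he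
  have hWmeas : MeasurableSet W := hVmeas.prod MeasurableSpace.measurableSet_top
  have hν0 : ν ({0} : Set (ZMod (t + 1))) = c := by
    rw [hν, Measure.smul_apply, Measure.count_singleton, smul_eq_mul, mul_one]
  have hW0 : 0 < μ' W := by
    rw [hμ', hWdef, Measure.prod_prod, hν0]
    exact ENNReal.mul_pos ht.ne' hcne
  refine ⟨{n : ℕ | 1 ≤ n ∧ 0 < μ' (W ∩ (Prod.map T e)^[n] ⁻¹' W)},
    ⟨Y × ZMod (t + 1), inferInstance, μ', inferInstance, Prod.map T e, W,
      hT', hWmeas, hW0, rfl⟩, ?_⟩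
  rintro a ⟨ha1, ha⟩
  have hpow : ∀ (n : ℕ) (x : ZMod (t + 1)), e^[n] x = x + (n : ZMod (t + 1)) := by
    intro n
    induction n with
    | zero => intro x; simp
    | succ n ih =>
      intro x
      rw [Function.iterate_succ_apply', ih x, he_def]
      push_cast
      ring
  have hiter : (Prod.map T e)^[a] = Prod.map T^[a] (fun x => x + (a : ZMod (t + 1))) := by
    rw [Prod.map_iterate]
    exact congrArg (Prod.map T^[a]) (funext (hpow a))
  have hpre : W ∩ (Prod.map T e)^[a] ⁻¹' W
      = (V ∩ T^[a] ⁻¹' V) ×ˢ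
        (({0} : Set (ZMod (t + 1))) ∩ (fun x => x + (a : ZMod (t + 1))) ⁻¹' {0}) := by
    rw [hiter, hWdef, Set.preimage_prod_map_prod, Set.prod_inter_prod]
  rw [hpre, Measure.prod_prod] at ha
  have hdvd : (t + 1) ∣ a := by
    by_contra hnd
    have hz : ((a : ZMod (t + 1)) ≠ 0) := fun h =>
      hnd ((ZMod.natCast_eq_zero_iff a (t + 1)).mp h)
    have hempty : (({0} : Set (ZMod (t + 1))) ∩
        (fun x => x + (a : ZMod (t + 1))) ⁻¹' {0}) = ∅ := by
      ext x
      simp only [Set.mem_inter_iff, Set.mem_singleton_iff, Set.mem_preimage,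
        Set.mem_empty_iff_false, iff_false, not_and]
      rintro rfl h
      exact hz (by simpa using h)
    rw [hempty, measure_empty, mul_zero] at ha
    exact lt_irrefl 0 ha
  have ha2 : 0 < μ (V ∩ T^[a] ⁻¹' V) := (ENNReal.mul_pos_iff.mp ha).1
  have hta : t < a := by
    have : t + 1 ≤ a := Nat.le_of_dvd (by omega) hdvd
    omega
  have hsub : V ∩ T^[a] ⁻¹' V ⊆ T^[t] ⁻¹' U ∩ T^[t + (a - t)] ⁻¹' U := by
    rw [show t + (a - t) = a from by omega]
    exact Set.inter_subset_inter Set.inter_subset_right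
      (Set.preimage_mono Set.inter_subset_left)
  have hfin : 0 < μ (U ∩ T^[a - t] ⁻¹' U) := by
    rw [← iterate_preimage_shift hT hU t (a - t)]
    exact lt_of_lt_of_le ha2 (measure_mono hsub)
  exact ⟨a - t, ⟨by omega, hfin⟩, by omega⟩

/-- Negative shifts: if t is a return time, some return-time set is ⊆ P - t. -/
private lemma exists_neg_shift {Y : Type} [MeasurableSpace Y] (μ : Measure Y)
    [IsProbabilityMeasure μ] (T : Y → Y) (U : Set Y) (hT : MeasurePreserving T μ μ)
    (hU : MeasurableSet U) {t : ℕ} (ht : 0 < μ (U ∩ T^[t] ⁻¹' U)) :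
    ∃ A : Set ℕ, IsReturnTimeSet A ∧
      ∀ a ∈ A, ∃ p : ℕ, (1 ≤ p ∧ 0 < μ (U ∩ T^[p] ⁻¹' U)) ∧ (a : ℤ) = (p : ℤ) + (-(t : ℤ)) := by
  set V : Set Y := U ∩ T^[t] ⁻¹' U with hVdef
  have hVmeas : MeasurableSet V := hU.inter ((hT.iterate t).measurable hU)
  refine ⟨{n : ℕ | 1 ≤ n ∧ 0 < μ (V ∩ T^[n] ⁻¹' V)},
    ⟨Y, inferInstance, μ, inferInstance, T, V, hT, hVmeas, ht, rfl⟩, ?_⟩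
  rintro a ⟨ha1, ha⟩
  have hTsub : T^[a] ⁻¹' V ⊆ T^[t + a] ⁻¹' U := by
    have : T^[t + a] ⁻¹' U = T^[a] ⁻¹' (T^[t] ⁻¹' U) := by
      rw [Function.iterate_add, Set.preimage_comp]
    rw [this]
    exact Set.preimage_mono Set.inter_subset_right
  have hsub : V ∩ T^[a] ⁻¹' V ⊆ U ∩ T^[t + a] ⁻¹' U :=
    Set.inter_subset_inter Set.inter_subset_left hTsub
  have hfin : 0 < μ (U ∩ T^[t + a] ⁻¹' U) := lt_of_lt_of_le ha (measure_mono hsub)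
  exact ⟨t + a, ⟨by omega, hfin⟩, by omega⟩

/-- If P is a return-time set, then the set of n ∈ ℤ such that P + n contains
a return-time set has bounded gaps (is syndetic in ℤ). -/
theorem returnTime_shifts_syndetic (P : Set ℕ) (hP : IsReturnTimeSet P) :
    ∃ L : ℤ, 0 < L ∧ ∀ m : ℤ, ∃ n : ℤ, m ≤ n ∧ n < m + L ∧
      ∃ A : Set ℕ, IsReturnTimeSet A ∧
        ∀ a ∈ A, ∃ p ∈ P, (a : ℤ) = (p : ℤ) + n := by
  obtain ⟨Y, mY, μ, hprob, T, U, hT, hU, hU0, rfl⟩ := hP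
  haveI := hprob
  obtain ⟨L, hL0, hLs⟩ := syndetic_aux μ T U hT hU hU0
  refine ⟨(L : ℤ), by exact_mod_cast hL0, ?_⟩
  intro m
  by_cases hm : 1 ≤ m
  · -- positive window: shift by k ∈ P with m ≤ k < m + L
    obtain ⟨k, hk1, hk2, hk3⟩ := hLs (m - 1).toNat
    have htn : ((m - 1).toNat : ℤ) = m - 1 := Int.toNat_of_nonneg (by omega)
    obtain ⟨A, hA, hAs⟩ := exists_pos_shift μ T U hT hU hk3
    refine ⟨(k : ℤ), by omega, by omega, A, hA, ?_⟩
    intro a ha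
    obtain ⟨p, hp, hpe⟩ := hAs a ha
    exact ⟨p, hp, hpe⟩
  · by_cases hm2 : m + L ≤ 0
    · -- negative window: shift by -k, k ∈ P with -m - L < k ≤ -m
      obtain ⟨k, hk1, hk2, hk3⟩ := hLs (-m - L).toNat
      have htn : (((-m - L).toNat : ℤ)) = -m - L := Int.toNat_of_nonneg (by omega)
      obtain ⟨A, hA, hAs⟩ := exists_neg_shift μ T U hT hU hk3
      refine ⟨-(k : ℤ), by omega, by omega, A, hA, ?_⟩
      intro a ha
      obtain ⟨p, hp, hpe⟩ := hAs a ha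
      exact ⟨p, hp, hpe⟩
    · -- window contains 0: shift by 0, A = P
      refine ⟨0, by omega, by omega,
        {n : ℕ | 1 ≤ n ∧ 0 < μ (U ∩ T^[n] ⁻¹' U)},
        ⟨Y, mY, μ, hprob, T, U, hT, hU, hU0, rfl⟩, ?_⟩
      intro a ha
      exact ⟨a, ha, by omega⟩
end

section
/- Every SIP⋆ subset of ℕ has bounded gaps; equivalently, any subset of ℕ with unbounded gaps has a complement containing an SIP set. -/
/-- The SIP (symmetric infinite-dimensional parallelepiped) set generated by a
sequence (s_i) of naturals: { Σ_i ε_i s_i : ε_i ∈ {−1,0,1}, finitely many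
nonzero } ∩ ℕ (positive part). -/
def SIPset (s : ℕ → ℕ) : Set ℕ :=
  {n : ℕ | 1 ≤ n ∧ ∃ (t : Finset ℕ) (ε : ℕ → ℤ),
    (∀ i, ε i = -1 ∨ ε i = 0 ∨ ε i = 1) ∧
    (n : ℤ) = ∑ i ∈ t, ε i * (s i : ℤ)}

/-- Every SIP⋆ subset of ℕ (a set meeting every SIP set) has bounded gaps. -/
theorem sipStar_boundedGaps (P : Set ℕ)
    (hP : ∀ s : ℕ → ℕ, (∀ i, 0 < s i) → (P ∩ SIPset s).Nonempty) :
    ∃ L : ℕ, 0 < L ∧ ∀ m : ℕ, ∃ n ∈ P, m ≤ n ∧ n < m + L := by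
  by_contra h
  push_neg at h
  -- extract, for each t, a gap of length 2t+2
  choose g hg using fun t : ℕ => h (2 * t + 2) (by omega)
  -- the recursive construction
  set step : ℕ → ℕ := fun u => g u + u + 1 with hstepdef
  set T : ℕ → ℕ := fun n => Nat.rec 0 (fun _ u => u + step u) n with hTdef
  set s : ℕ → ℕ := fun n => step (T n) with hsdef
  have hTsucc : ∀ n, T (n + 1) = T n + s n := fun n => rfl
  have hskey : ∀ n, s n = g (T n) + T n + 1 := fun n => rfl
  have hspos : ∀ n, 0 < s n := fun n => by rw [hskey]; omega
  have hTsum : ∀ n, T n = ∑ i ∈ Finset.range n, s i := by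
    intro n
    induction n with
    | zero => rfl
    | succ n ih => rw [Finset.sum_range_succ, ← ih, hTsucc]
  obtain ⟨n, hnP, hn1, t, ε, hε, hsum⟩ := hP s hspos
  -- restrict to indices with nonzero coefficient
  set F : Finset ℕ := t.filter (fun i => ε i ≠ 0) with hFdef
  have hsum' : (n : ℤ) = ∑ i ∈ F, ε i * (s i : ℤ) := by
    rw [hsum]
    exact (Finset.sum_filter_of_ne (fun x _ hx => by
      intro h0; apply hx; rw [h0, zero_mul])).symm
  have hFne : F.Nonempty := by
    by_contra hFe
    rw [Finset.not_nonempty_iff_eq_empty] at hFe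
    rw [hFe, Finset.sum_empty] at hsum'
    omega
  set k : ℕ := F.max' hFne with hkdef
  have hkF : k ∈ F := F.max'_mem hFne
  have hεk : ε k ≠ 0 := (Finset.mem_filter.mp hkF).2
  -- split off the top term
  have hsplit : (n : ℤ) = ε k * (s k : ℤ) + ∑ i ∈ F.erase k, ε i * (s i : ℤ) := by
    rw [hsum', ← Finset.add_sum_erase F _ hkF]
  -- bound the remainder
  have hsub : F.erase k ⊆ Finset.range k := by
    intro i hi
    rw [Finset.mem_range]
    have h1 : i ≠ k := (Finset.mem_erase.mp hi).1
    have h2 : i ≤ k := F.le_max' i (Finset.mem_erase.mp hi).2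
    omega
  have hRbound : |∑ i ∈ F.erase k, ε i * (s i : ℤ)| ≤ (T k : ℤ) := by
    calc |∑ i ∈ F.erase k, ε i * (s i : ℤ)|
        ≤ ∑ i ∈ F.erase k, |ε i * (s i : ℤ)| := Finset.abs_sum_le_sum_abs _ _
      _ ≤ ∑ i ∈ F.erase k, (s i : ℤ) := by
          apply Finset.sum_le_sum
          intro i _
          rw [abs_mul]
          have : |ε i| ≤ 1 := by rcases hε i with h' | h' | h' <;> simp [h']
          calc |ε i| * |(s i : ℤ)| ≤ 1 * |(s i : ℤ)| := by
                apply mul_le_mul_of_nonneg_right this (abs_nonneg _)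
            _ = (s i : ℤ) := by rw [one_mul, abs_of_nonneg (by positivity)]
      _ ≤ ∑ i ∈ Finset.range k, (s i : ℤ) :=
          Finset.sum_le_sum_of_subset_of_nonneg hsub (fun i _ _ => by positivity)
      _ = (T k : ℤ) := by rw [hTsum k]; push_cast; ring
  have hsk : s k = g (T k) + T k + 1 := hskey k
  rcases hε k with h1 | h1 | h1
  · -- ε k = -1 : the sum is nonpositive, contradicting n ≥ 1
    rw [h1] at hsplit
    have : (n : ℤ) ≤ -(s k : ℤ) + (T k : ℤ) := by
      rw [hsplit]
      have := (abs_le.mp hRbound).2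
      omega
    omega
  · exact absurd h1 hεk
  · -- ε k = 1 : n lands in the gap around s k
    rw [h1, one_mul] at hsplit
    obtain ⟨hl, hr⟩ := abs_le.mp hRbound
    have hlow : (s k : ℤ) - (T k : ℤ) ≤ (n : ℤ) := by omega
    have hhigh : (n : ℤ) ≤ (s k : ℤ) + (T k : ℤ) := by omega
    have hgap := hg (T k) n hnP
    have h2 : g (T k) ≤ n := by omega
    have h3 : n < g (T k) + (2 * T k + 2) := by omega
    exact absurd (hgap h2) (by omega)
end

section
/- For an irrational α ∈ 𝕋 and 0 < ε < 1/2, the set {n ∈ ℕ : nα mod 1 ∈ (0,ε)} is SIP⋆: it intersects every SIP set. -/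
/-- Auxiliary: any natural of the form (σ c − σ b) − (σ b − σ a) (where σ are the
partial sums of s) belongs to `SIPset s`. -/
lemma sip_aux (s : ℕ → ℕ) (a b c : ℕ) (hab : a ≤ b) (hbc : b ≤ c) (N : ℕ) (hN : 1 ≤ N)
    (hNeq : (N : ℤ) = ((∑ i ∈ Finset.range c, (s i : ℤ)) - ∑ i ∈ Finset.range b, (s i : ℤ))
      - ((∑ i ∈ Finset.range b, (s i : ℤ)) - ∑ i ∈ Finset.range a, (s i : ℤ))) :
    N ∈ SIPset s := by
  classical
  refine ⟨hN, Finset.Ico a c,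
    (fun i => if a ≤ i ∧ i < b then (-1 : ℤ) else if b ≤ i ∧ i < c then 1 else 0),
    fun i => by dsimp only; split_ifs <;> simp, ?_⟩
  rw [← Finset.sum_Ico_consecutive _ hab hbc]
  have h1 : ∑ i ∈ Finset.Ico a b,
      (if a ≤ i ∧ i < b then (-1 : ℤ) else if b ≤ i ∧ i < c then 1 else 0) * (s i : ℤ)
      = -∑ i ∈ Finset.Ico a b, (s i : ℤ) := by
    rw [← Finset.sum_neg_distrib]
    refine Finset.sum_congr rfl fun i hi => ?_
    rw [Finset.mem_Ico] at hi
    rw [if_pos ⟨hi.1, hi.2⟩]; ring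
  have h2 : ∑ i ∈ Finset.Ico b c,
      (if a ≤ i ∧ i < b then (-1 : ℤ) else if b ≤ i ∧ i < c then 1 else 0) * (s i : ℤ)
      = ∑ i ∈ Finset.Ico b c, (s i : ℤ) := by
    refine Finset.sum_congr rfl fun i hi => ?_
    rw [Finset.mem_Ico] at hi
    rw [if_neg (by omega), if_pos ⟨hi.1, hi.2⟩]; ring
  rw [h1, h2, Finset.sum_Ico_eq_sub _ hab, Finset.sum_Ico_eq_sub _ hbc, hNeq]
  ring

/-- For irrational α and 0 < ε < 1/2, the set {n ∈ ℕ : nα mod 1 ∈ (0,ε)} is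
SIP⋆: it intersects every SIP set (Akin–Glasner). -/
theorem visitTimes_irrational_rotation_isSIPStar (α : ℝ) (hα : Irrational α)
    (ε : ℝ) (hε0 : 0 < ε) (hε : ε < 1 / 2) (s : ℕ → ℕ) (hs : ∀ i, 0 < s i) :
    ∃ n ∈ SIPset s, Int.fract ((n : ℝ) * α) ∈ Set.Ioo 0 ε := by
  classical
  set σ : ℕ → ℕ := fun k => ∑ i ∈ Finset.range k, s i with hσdef
  have hσmono : StrictMono σ := strictMono_nat_of_lt_succ fun n => by
    simp only [hσdef, Finset.sum_range_succ]
    exact Nat.lt_add_of_pos_right (hs n)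
  have hσcast : ∀ k, (σ k : ℤ) = ∑ i ∈ Finset.range k, (s i : ℤ) := fun k => by
    simp [hσdef]
  have hσge : ∀ k, k ≤ σ k := fun k => by
    calc k = ∑ i ∈ Finset.range k, 1 := by simp
    _ ≤ σ k := Finset.sum_le_sum fun i _ => hs i
  set x : ℕ → ℝ := fun k => Int.fract ((σ k : ℝ) * α) with hxdef
  have hx0 : ∀ k, 0 ≤ x k := fun k => Int.fract_nonneg _
  have hx1 : ∀ k, x k < 1 := fun k => Int.fract_lt_one _
  -- injectivity of x
  have hinj : Function.Injective x := by
    intro a b hab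
    by_contra hne
    obtain ⟨z, hz⟩ := Int.fract_eq_fract.mp hab
    have hσne : (σ a : ℤ) - σ b ≠ 0 := by
      intro h
      exact hne (hσmono.injective (by exact_mod_cast sub_eq_zero.mp h))
    have hirr : Irrational ((((σ a : ℤ) - σ b : ℤ) : ℝ) * α) := hα.intCast_mul hσne
    apply hirr.ne_int z
    push_cast
    linarith [hz]
  -- the key fract computation
  have hfract : ∀ a b c : ℕ, ∀ N : ℕ,
      (N : ℤ) = ((σ c : ℤ) - σ b) - ((σ b : ℤ) - σ a) →
      Int.fract ((N : ℝ) * α) = Int.fract ((x c - x b) - (x b - x a)) := by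
    intro a b c N hNeq
    have hNr : (N : ℝ) = ((σ c : ℝ) - σ b) - ((σ b : ℝ) - σ a) := by exact_mod_cast hNeq
    have : (N : ℝ) * α = ((x c - x b) - (x b - x a))
        + ((⌊(σ c : ℝ) * α⌋ - 2 * ⌊(σ b : ℝ) * α⌋ + ⌊(σ a : ℝ) * α⌋ : ℤ) : ℝ) := by
      simp only [hxdef, Int.fract]
      push_cast
      rw [hNr]; ring
    rw [this, Int.fract_add_intCast]
  -- cluster point
  obtain ⟨L, -, φ, hφ, hconv⟩ := (isCompact_Icc (a := (0:ℝ)) (b := 1)).tendsto_subseq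
    (x := x) (fun n => ⟨hx0 n, (hx1 n).le⟩)
  have hcl : ∀ η : ℝ, 0 < η → ∀ M : ℕ, ∃ k, M < k ∧ |x k - L| < η := by
    intro η hη M
    obtain ⟨K, hK⟩ := Metric.tendsto_atTop.mp hconv η hη
    refine ⟨φ (max K (M + 1)), ?_, ?_⟩
    · calc M < M + 1 := Nat.lt_succ_self M
      _ ≤ max K (M + 1) := le_max_right _ _
      _ ≤ φ (max K (M + 1)) := hφ.le_apply
    · have := hK (max K (M + 1)) (le_max_left _ _)
      rwa [Function.comp_apply, Real.dist_eq] at this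
  by_cases hA : ∃ a b : ℕ, a < b ∧ 0 < x b - x a ∧ x b - x a < ε
  · -- easy case: an increasing close pair
    obtain ⟨a, b, hab, h1, h2⟩ := hA
    have hσab : σ a < σ b := hσmono hab
    refine ⟨σ b - σ a, ?_, ?_⟩
    · refine sip_aux s a a b le_rfl hab.le _ (by omega) ?_
      simp only [← hσcast]
      push_cast [Nat.cast_sub hσab.le]
      ring
    · have hNeq : ((σ b - σ a : ℕ) : ℤ) = ((σ b : ℤ) - σ a) - ((σ a : ℤ) - σ a) := by
        push_cast [Nat.cast_sub hσab.le]; ring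
      rw [hfract a a b _ hNeq]
      have hv : (x b - x a) - (x a - x a) = x b - x a := by ring
      rw [hv, Int.fract_eq_self.mpr ⟨h1.le, by nlinarith [hx0 a, hx1 b]⟩]
      exact ⟨h1, h2⟩
  · push_neg at hA
    -- in this case, beyond any M there are points just above L
    have hbelow : ∀ k1 : ℕ, x k1 < L → L - x k1 < ε / 2 → False := by
      intro k1 hlt hsm
      obtain ⟨k2, hk2, hd⟩ := hcl (L - x k1) (by linarith) k1
      rw [abs_lt] at hd
      have h1 : 0 < x k2 - x k1 := by linarith
      have h2 : x k2 - x k1 < ε := by linarith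
      exact absurd h2 (not_lt.mpr (le_of_not_gt fun h => absurd (hA k1 k2 hk2 h1) (not_le.mpr h)))
    have claim : ∀ η : ℝ, 0 < η → η ≤ ε / 2 → ∀ M : ℕ, ∃ k, M < k ∧ L < x k ∧ x k < L + η := by
      intro η hη hηε M
      obtain ⟨k1, hk1M, hd1⟩ := hcl (η / 2) (by linarith) M
      rw [abs_lt] at hd1
      rcases lt_trichotomy L (x k1) with h | h | h
      · exact ⟨k1, hk1M, h, by linarith⟩
      · obtain ⟨k2, hk2, hd2⟩ := hcl (η / 2) (by linarith) k1
        rw [abs_lt] at hd2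
        rcases lt_trichotomy L (x k2) with h' | h' | h'
        · exact ⟨k2, lt_trans hk1M hk2, h', by linarith⟩
        · exact absurd (hinj (show x k1 = x k2 by rw [← h, ← h'])) (Nat.ne_of_lt hk2)
        · exact absurd (hbelow k2 h' (by linarith)) id
      · exact absurd (hbelow k1 h (by linarith)) id
    obtain ⟨k0, -, hL0, h0⟩ := claim (ε / 2) (by linarith) le_rfl 0
    obtain ⟨k1, hk01, hL1, h1⟩ := claim ((x k0 - L) / 2) (by linarith) (by linarith) k0
    obtain ⟨k2, hk12, hL2, h2⟩ := claim ((x k1 - L) / 2) (by linarith) (by linarith)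
      (max k1 (2 * σ k1))
    have hk12' : k1 < k2 := lt_of_le_of_lt (le_max_left _ _) hk12
    have hσ2 : 2 * σ k1 < σ k2 :=
      lt_of_lt_of_le (lt_of_le_of_lt (le_max_right _ _) hk12) (hσge k2)
    have hσ01 : σ k0 < σ k1 := hσmono hk01
    -- the SIP element
    set N : ℕ := (σ k2 + σ k0) - 2 * σ k1 with hNdef
    have hNeq : (N : ℤ) = ((σ k2 : ℤ) - σ k1) - ((σ k1 : ℤ) - σ k0) := by
      have : 2 * σ k1 ≤ σ k2 + σ k0 := by omega
      push_cast [hNdef, Nat.cast_sub this]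
      ring
    refine ⟨N, ?_, ?_⟩
    · refine sip_aux s k0 k1 k2 hk01.le hk12'.le N (by omega) ?_
      rw [hNeq, hσcast, hσcast, hσcast]
    · rw [hfract k0 k1 k2 N hNeq]
      have hvpos : 0 < (x k2 - x k1) - (x k1 - x k0) := by linarith
      have hvlt : (x k2 - x k1) - (x k1 - x k0) < ε := by linarith
      rw [Int.fract_eq_self.mpr ⟨hvpos.le, by linarith⟩]
      exact ⟨hvpos, hvlt⟩
end

section
/- Let Q ⊆ ℕ be nonempty with (Q+Q) ∩ Q = ∅ (equivalently ℕ∖Q is Δ_3⋆). If μ is a probability measure on 𝕋 whose Fourier coefficients vanish outside Q ∪ (−Q) ∪ {0}, then Σ_{s ∈ Q} |μ̂(s)|² ≤ 1; in particular μ is not singular with respect to Lebesgue measure. -/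
open MeasureTheory
open scoped ComplexConjugate

lemma part1 (Q : Set ℕ) (hsum : ∀ a ∈ Q, ∀ b ∈ Q, a + b ∉ Q)
    (μ : Measure (AddCircle (1 : ℝ))) [IsProbabilityMeasure μ]
    (hsupp : ∀ n : ℤ, (∫ x, fourier (-n) x ∂μ) ≠ 0 →
      (∃ q ∈ Q, (q : ℤ) = n) ∨ (∃ q ∈ Q, -(q : ℤ) = n) ∨ n = 0)
    (t : Finset ℕ) (ht : ↑t ⊆ Q) :
    ∑ s ∈ t, ‖∫ x, fourier (-(s : ℤ)) x ∂μ‖ ^ 2 ≤ 1 := by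
  set c : ℕ → ℂ := fun s => ∫ x, fourier (-(s : ℤ)) x ∂μ with hc
  set S : ℝ := ∑ s ∈ t, ‖c s‖ ^ 2 with hS
  have hS0 : 0 ≤ S := Finset.sum_nonneg fun s _ => by positivity
  set f : AddCircle (1:ℝ) → ℂ := fun x => ∑ s ∈ t, c s * fourier (s : ℤ) x with hf
  have hcont : Continuous f := by
    apply continuous_finset_sum
    exact fun s _ => continuous_const.mul (fourier (s:ℤ)).continuous
  have hcs : HasCompactSupport f :=
    IsCompact.of_isClosed_subset isCompact_univ (isClosed_tsupport f) (Set.subset_univ _)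
  -- orthogonality
  have horth : ∀ s ∈ t, ∀ s' ∈ t, s ≠ s' → (∫ x, fourier ((s:ℤ) - s') x ∂μ) = 0 := by
    intro s hs s' hs' hne
    by_contra h
    have h' : (∫ x, fourier (-((s':ℤ) - s)) x ∂μ) ≠ 0 := by
      rwa [neg_sub]
    rcases hsupp _ h' with ⟨q, hq, hqe⟩ | ⟨q, hq, hqe⟩ | h0
    · have hz : (s':ℤ) = s + q := by linarith
      have : s' = s + q := by exact_mod_cast hz
      exact hsum s (ht hs) q hq (this ▸ ht hs')
    · have hz : (s:ℤ) = s' + q := by linarith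
      have : s = s' + q := by exact_mod_cast hz
      exact hsum s' (ht hs') q hq (this ▸ ht hs)
    · have hz : (s':ℤ) = s := sub_eq_zero.mp h0
      exact hne (by exact_mod_cast hz.symm)
  have hfour_int : ∀ n : ℤ, Integrable (fun x => fourier n x) μ :=
    fun n => ((fourier n).continuous).integrable_of_hasCompactSupport
      (IsCompact.of_isClosed_subset isCompact_univ (isClosed_tsupport _) (Set.subset_univ _))
  have hconj : ∀ s : ℕ, (∫ x, fourier (s:ℤ) x ∂μ) = conj (c s) := by
    intro s
    rw [hc, ← integral_conj]
    congr 1; ext x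
    rw [← fourier_neg, neg_neg]
  -- first moment
  have h1 : (∫ x, f x ∂μ) = (S : ℂ) := by
    simp only [hf]
    rw [integral_finset_sum t (f := fun s x => c s * fourier (s:ℤ) x)
      (fun s _ => (hfour_int (s:ℤ)).const_mul _)]
    rw [hS]
    push_cast
    refine Finset.sum_congr rfl fun s hs => ?_
    rw [integral_const_mul, hconj, Complex.mul_conj']
  -- second moment
  have h2 : (∫ x, conj (f x) * f x ∂μ) = (S : ℂ) := by
    have hexp : ∀ x, conj (f x) * f x
        = ∑ s' ∈ t, ∑ s ∈ t, conj (c s) * c s' * fourier ((s':ℤ) - s) x := by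
      intro x
      simp only [hf, map_sum, Finset.sum_mul, Finset.mul_sum, map_mul]
      refine Finset.sum_congr rfl fun s' _ => Finset.sum_congr rfl fun s _ => ?_
      rw [sub_eq_add_neg, fourier_add, ← fourier_neg]
      ring
    simp only [hexp]
    rw [integral_finset_sum t (f := fun s' x => ∑ s ∈ t, conj (c s) * c s' * fourier ((s':ℤ) - s) x)
      (fun s' _ => integrable_finset_sum t (fun s _ => (hfour_int _).const_mul _))]
    have key : ∀ s' ∈ t, (∫ x, ∑ s ∈ t, conj (c s) * c s' * fourier ((s':ℤ) - s) x ∂μ)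
        = ((‖c s'‖^2 : ℝ) : ℂ) := by
      intro s' hs'
      rw [integral_finset_sum t (f := fun s x => conj (c s) * c s' * fourier ((s':ℤ) - s) x)
        (fun s _ => (hfour_int _).const_mul _)]
      rw [Finset.sum_eq_single s']
      · rw [integral_const_mul, sub_self]
        have h00 : (∫ x, fourier (0:ℤ) x ∂μ) = 1 := by
          simp [fourier_zero]
        rw [h00, mul_one, mul_comm, Complex.mul_conj']
        norm_cast
      · intro s hs hne
        rw [integral_const_mul, horth s' hs' s hs (fun h => hne h.symm), mul_zero]
      · exact fun h => absurd hs' h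
    rw [Finset.sum_congr rfl key, hS]
    push_cast
    ring
  -- L² Cauchy–Schwarz
  have hmem : MemLp f 2 μ := hcont.memLp_of_hasCompactSupport hcs
  have hone : MemLp (fun _ : AddCircle (1:ℝ) => (1:ℂ)) 2 μ := memLp_const 1
  set F := hmem.toLp f with hF
  set G := hone.toLp _ with hG
  have hFa := hmem.coeFn_toLp
  have hGa := hone.coeFn_toLp
  have hinnerGF : (inner ℂ G F : ℂ) = (S : ℂ) := by
    rw [MeasureTheory.L2.inner_def, ← h1]
    apply integral_congr_ae
    filter_upwards [hFa, hGa] with x hx hy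
    rw [hx, hy]
    simp [RCLike.inner_apply]
  have hinnerFF : (inner ℂ F F : ℂ) = (S : ℂ) := by
    rw [MeasureTheory.L2.inner_def, ← h2]
    apply integral_congr_ae
    filter_upwards [hFa] with x hx
    rw [hx]
    simp [RCLike.inner_apply, Complex.conj_mul']
  have hnF : ‖F‖ ^ 2 = S := by
    have h := @inner_self_eq_norm_sq ℂ _ _ _ _ F
    rw [hinnerFF] at h
    simpa using h.symm
  have hnG : ‖G‖ ^ 2 = 1 := by
    have h := @inner_self_eq_norm_sq ℂ _ _ _ _ G
    have hGG : (inner ℂ G G : ℂ) = 1 := by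
      rw [MeasureTheory.L2.inner_def]
      have hae : ∀ᵐ x ∂μ, (inner ℂ ((G : AddCircle (1:ℝ) → ℂ) x) ((G : AddCircle (1:ℝ) → ℂ) x) : ℂ)
          = 1 := by
        filter_upwards [hGa] with x hx
        rw [hx]
        simp [RCLike.inner_apply]
      rw [integral_congr_ae hae, integral_const]
      simp
    rw [hGG] at h
    simpa using h.symm
  have hle : S ≤ ‖G‖ * ‖F‖ := by
    have h := norm_inner_le_norm (𝕜 := ℂ) G F
    rwa [hinnerGF, Complex.norm_real, Real.norm_eq_abs, abs_of_nonneg hS0] at h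
  nlinarith [norm_nonneg F, norm_nonneg G, hnF, hnG, hle]

lemma cont_integrable {T : ℝ} [hT : Fact (0 < T)] (μ : Measure (AddCircle T)) [IsFiniteMeasure μ]
    (φ : C(AddCircle T, ℂ)) : Integrable (fun x => φ x) μ :=
  φ.continuous.integrable_of_hasCompactSupport
    (IsCompact.of_isClosed_subset isCompact_univ (isClosed_tsupport _) (Set.subset_univ _))

noncomputable def intCLM {T : ℝ} [hT : Fact (0 < T)] (μ : Measure (AddCircle T))
    [IsProbabilityMeasure μ] : C(AddCircle T, ℂ) →L[ℂ] ℂ :=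
  LinearMap.mkContinuous
    { toFun := fun φ => ∫ x, φ x ∂μ
      map_add' := fun φ ψ => by
        simp only [ContinuousMap.add_apply]
        exact integral_add (cont_integrable μ φ) (cont_integrable μ ψ)
      map_smul' := fun r φ => by
        simp only [ContinuousMap.smul_apply, smul_eq_mul, RingHom.id_apply]
        rw [integral_const_mul] }
    1 (fun φ => by
      calc ‖∫ x, φ x ∂μ‖ ≤ ∫ x, ‖φ x‖ ∂μ := norm_integral_le_integral_norm _
        _ ≤ ∫ _x, ‖φ‖ ∂μ := integral_mono (cont_integrable μ φ).norm (integrable_const _)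
            (fun x => φ.norm_coe_le_norm x)
        _ = ‖φ‖ := by simp
        _ = 1 * ‖φ‖ := (one_mul _).symm)

@[simp] lemma intCLM_apply {T : ℝ} [hT : Fact (0 < T)] (μ : Measure (AddCircle T))
    [IsProbabilityMeasure μ] (φ : C(AddCircle T, ℂ)) : intCLM μ φ = ∫ x, φ x ∂μ := rfl

noncomputable def pairCLM {T : ℝ} [hT : Fact (0 < T)] (ν : Measure (AddCircle T))
    [IsProbabilityMeasure ν] (g : AddCircle T → ℂ) (hg : Integrable g ν) :
    C(AddCircle T, ℂ) →L[ℂ] ℂ :=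
  LinearMap.mkContinuous
    { toFun := fun φ => ∫ x, φ x * g x ∂ν
      map_add' := fun φ ψ => by
        simp only [ContinuousMap.add_apply, add_mul]
        exact integral_add
          (hg.bdd_mul φ.continuous.aestronglyMeasurable (ae_of_all _ φ.norm_coe_le_norm))
          (hg.bdd_mul ψ.continuous.aestronglyMeasurable (ae_of_all _ ψ.norm_coe_le_norm))
      map_smul' := fun r φ => by
        simp only [ContinuousMap.smul_apply, smul_eq_mul, RingHom.id_apply, mul_assoc]
        rw [integral_const_mul] }
    (∫ x, ‖g x‖ ∂ν) (fun φ => by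
      have hint : Integrable (fun x => φ x * g x) ν :=
        hg.bdd_mul φ.continuous.aestronglyMeasurable (ae_of_all _ φ.norm_coe_le_norm)
      calc ‖∫ x, φ x * g x ∂ν‖ ≤ ∫ x, ‖φ x * g x‖ ∂ν := norm_integral_le_integral_norm _
        _ ≤ ∫ x, ‖φ‖ * ‖g x‖ ∂ν := by
            refine integral_mono hint.norm (hg.norm.const_mul _) (fun x => ?_)
            rw [norm_mul]
            exact mul_le_mul_of_nonneg_right (φ.norm_coe_le_norm x) (norm_nonneg _)
        _ = (∫ x, ‖g x‖ ∂ν) * ‖φ‖ := by rw [integral_const_mul, mul_comm])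

@[simp] lemma pairCLM_apply {T : ℝ} [hT : Fact (0 < T)] (ν : Measure (AddCircle T))
    [IsProbabilityMeasure ν] (g : AddCircle T → ℂ) (hg : Integrable g ν)
    (φ : C(AddCircle T, ℂ)) : pairCLM ν g hg φ = ∫ x, φ x * g x ∂ν := rfl

lemma pairing_ext {T : ℝ} [hT : Fact (0 < T)] (μ : Measure (AddCircle T))
    [IsProbabilityMeasure μ] (g : AddCircle T → ℂ)
    (hg : Integrable g (AddCircle.haarAddCircle (T := T)))
    (h : ∀ n : ℤ, (∫ x, fourier n x ∂μ) = ∫ x, fourier n x * g x ∂AddCircle.haarAddCircle) :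
    ∀ φ : C(AddCircle T, ℂ), (∫ x, φ x ∂μ) = ∫ x, φ x * g x ∂AddCircle.haarAddCircle := by
  have hd : Dense ((Submodule.span ℂ (Set.range (fourier (T := T)))) : Set C(AddCircle T, ℂ)) :=
    Submodule.dense_iff_topologicalClosure_eq_top.mpr span_fourier_closure_eq_top
  have heq : intCLM μ = pairCLM AddCircle.haarAddCircle g hg := by
    apply ContinuousLinearMap.ext_on hd
    rintro φ ⟨n, rfl⟩
    simpa using h n
  intro φ
  have := congrArg (fun L => L φ) heq
  simpa using this

lemma sq_sum_bound (Q : Set ℕ) (hQ0 : 0 ∉ Q)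
    (μ : Measure (AddCircle (1 : ℝ))) [IsProbabilityMeasure μ]
    (hsupp : ∀ n : ℤ, (∫ x, fourier (-n) x ∂μ) ≠ 0 →
      (∃ q ∈ Q, (q : ℤ) = n) ∨ (∃ q ∈ Q, -(q : ℤ) = n) ∨ n = 0)
    (P : ∀ t : Finset ℕ, ↑t ⊆ Q →
      ∑ s ∈ t, ‖∫ x, fourier (-(s : ℤ)) x ∂μ‖ ^ 2 ≤ 1)
    (u : Finset ℤ) :
    ∑ n ∈ u, ‖∫ x, fourier (-n) x ∂μ‖ ^ 2 ≤ 3 := by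
  classical
  set c : ℤ → ℂ := fun n => ∫ x, fourier (-n) x ∂μ with hc
  have hcnorm : ∀ n : ℤ, ‖c (-n)‖ = ‖c n‖ := by
    intro n
    have h : c (-n) = conj (c n) := by
      rw [hc]
      simp only [neg_neg]
      rw [← integral_conj]
      congr 1; ext x
      simp [fourier_neg]
    rw [h, RCLike.norm_conj]
  have hc0 : ‖c 0‖ ^ 2 = 1 := by
    have : c 0 = 1 := by
      rw [hc]; simp [fourier_zero]
    rw [this]; simp
  have hnonneg : ∀ n : ℤ, 0 ≤ ‖c n‖ ^ 2 := fun n => by positivity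
  -- restrict to nonzero coefficients
  set u' : Finset ℤ := u.filter (fun n => c n ≠ 0) with hu'
  have hstep1 : ∑ n ∈ u, ‖c n‖ ^ 2 = ∑ n ∈ u', ‖c n‖ ^ 2 := by
    refine (Finset.sum_subset (Finset.filter_subset _ _) ?_).symm
    intro n hn hn'
    have h0 : c n = 0 := by
      by_contra h
      exact hn' (Finset.mem_filter.mpr ⟨hn, h⟩)
    simp [h0]
  -- positive part
  have hpos : ∀ (v : Finset ℤ), (∀ n ∈ v, 0 < n ∧ c n ≠ 0) →
      ∑ n ∈ v, ‖c n‖ ^ 2 ≤ 1 := by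
    intro v hv
    have hinj : ∀ x ∈ v, ∀ y ∈ v, x.toNat = y.toNat → x = y := by
      intro x hx y hy hxy
      have := (hv x hx).1; have := (hv y hy).1
      omega
    have himg : ∑ k ∈ v.image Int.toNat, ‖c (k : ℤ)‖ ^ 2 = ∑ n ∈ v, ‖c n‖ ^ 2 := by
      rw [Finset.sum_image hinj]
      refine Finset.sum_congr rfl fun n hn => ?_
      have : ((n.toNat : ℤ)) = n := Int.toNat_of_nonneg (le_of_lt (hv n hn).1)
      rw [this]
    have hsub : ↑(v.image Int.toNat) ⊆ Q := by
      intro k hk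
      simp only [Finset.coe_image, Set.mem_image, Finset.mem_coe] at hk
      obtain ⟨n, hn, rfl⟩ := hk
      obtain ⟨hn0, hcn⟩ := hv n hn
      rcases hsupp n hcn with ⟨q, hq, hqe⟩ | ⟨q, hq, hqe⟩ | h0
      · have : n.toNat = q := by omega
        rwa [this]
      · exfalso
        have hq0 : q ≠ 0 := fun h => hQ0 (h ▸ hq)
        omega
      · omega
    calc ∑ n ∈ v, ‖c n‖ ^ 2 = ∑ k ∈ v.image Int.toNat, ‖c (k:ℤ)‖ ^ 2 := himg.symm
      _ ≤ 1 := P _ hsub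
  -- split u' into positive, zero, negative parts
  have hsplit : ∑ n ∈ u', ‖c n‖ ^ 2
      = ∑ n ∈ u'.filter (fun n => 0 < n), ‖c n‖ ^ 2
        + (∑ n ∈ (u'.filter (fun n => ¬ 0 < n)).filter (fun n => n = 0), ‖c n‖ ^ 2
          + ∑ n ∈ (u'.filter (fun n => ¬ 0 < n)).filter (fun n => ¬ n = 0), ‖c n‖ ^ 2) := by
    rw [Finset.sum_filter_add_sum_filter_not ((u'.filter (fun n => ¬ 0 < n))) (fun n => n = 0)]
    rw [Finset.sum_filter_add_sum_filter_not u' (fun n => 0 < n)]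
  have h1 : ∑ n ∈ u'.filter (fun n => 0 < n), ‖c n‖ ^ 2 ≤ 1 := by
    apply hpos
    intro n hn
    simp only [hu', Finset.mem_filter] at hn
    exact ⟨hn.2, hn.1.2⟩
  have h2 : ∑ n ∈ (u'.filter (fun n => ¬ 0 < n)).filter (fun n => n = 0), ‖c n‖ ^ 2 ≤ 1 := by
    have hsub : (u'.filter (fun n => ¬ 0 < n)).filter (fun n => n = 0) ⊆ {0} := by
      intro n hn
      simp only [Finset.mem_filter] at hn
      simp [hn.2]
    calc ∑ n ∈ (u'.filter (fun n => ¬ 0 < n)).filter (fun n => n = 0), ‖c n‖ ^ 2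
        ≤ ∑ n ∈ ({0} : Finset ℤ), ‖c n‖ ^ 2 :=
          Finset.sum_le_sum_of_subset_of_nonneg hsub (fun n _ _ => hnonneg n)
      _ = 1 := by rw [Finset.sum_singleton, hc0]
  have h3 : ∑ n ∈ (u'.filter (fun n => ¬ 0 < n)).filter (fun n => ¬ n = 0), ‖c n‖ ^ 2 ≤ 1 := by
    set w := (u'.filter (fun n => ¬ 0 < n)).filter (fun n => ¬ n = 0) with hw
    have hwneg : ∀ n ∈ w, n < 0 ∧ c n ≠ 0 := by
      intro n hn
      simp only [hw, hu', Finset.mem_filter] at hn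
      exact ⟨by omega, hn.1.1.2⟩
    -- map to positives via negation
    have hinj : ∀ x ∈ w, ∀ y ∈ w, -x = -y → x = y := fun x _ y _ h => by omega
    have himg : ∑ n ∈ w.image (fun n => -n), ‖c n‖ ^ 2 = ∑ n ∈ w, ‖c n‖ ^ 2 := by
      rw [Finset.sum_image hinj]
      exact Finset.sum_congr rfl fun n hn => by rw [hcnorm]
    rw [← himg]
    apply hpos
    intro n hn
    simp only [Finset.mem_image] at hn
    obtain ⟨m, hm, rfl⟩ := hn
    obtain ⟨hm0, hcm⟩ := hwneg m hm
    refine ⟨by omega, ?_⟩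
    intro h
    apply hcm
    have hnm := hcnorm m
    rw [h, norm_zero] at hnm
    exact norm_eq_zero.mp hnm.symm
  rw [hstep1, hsplit]
  linarith

lemma not_singular_of_bound (Q : Set ℕ) (hQ0 : 0 ∉ Q)
    (μ : Measure (AddCircle (1 : ℝ))) [IsProbabilityMeasure μ]
    (hsupp : ∀ n : ℤ, (∫ x, fourier (-n) x ∂μ) ≠ 0 →
      (∃ q ∈ Q, (q : ℤ) = n) ∨ (∃ q ∈ Q, -(q : ℤ) = n) ∨ n = 0)
    (P : ∀ t : Finset ℕ, ↑t ⊆ Q →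
      ∑ s ∈ t, ‖∫ x, fourier (-(s : ℤ)) x ∂μ‖ ^ 2 ≤ 1) :
    ¬ μ ⟂ₘ (volume : Measure (AddCircle (1 : ℝ))) := by
  classical
  haveI : Fact (0 < (1:ℝ)) := ⟨one_pos⟩
  set ν : Measure (AddCircle (1:ℝ)) := AddCircle.haarAddCircle with hν
  set c : ℤ → ℂ := fun n => ∫ x, fourier (-n) x ∂μ with hc
  -- ℓ² membership of coefficients
  have hsummable : Summable (fun n : ℤ => ‖c n‖ ^ 2) :=
    summable_of_sum_le (fun n => by positivity) (sq_sum_bound Q hQ0 μ hsupp P)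
  have hmem : Memℓp c 2 := by
    apply memℓp_gen
    have h2 : ((2:ENNReal)).toReal = (2:ℝ) := by norm_num
    simp only [h2]
    have : ∀ n : ℤ, ‖c n‖ ^ (2:ℝ) = ‖c n‖ ^ (2:ℕ) := fun n => by
      rw [← Real.rpow_natCast (‖c n‖) 2]; norm_num
    simp only [this]
    exact hsummable
  set E : lp (fun _ : ℤ => ℂ) 2 := ⟨c, hmem⟩ with hE
  set g0 : Lp ℂ 2 ν := fourierBasis.repr.symm E with hg0
  set g : AddCircle (1:ℝ) → ℂ := (g0 : AddCircle (1:ℝ) → ℂ) with hg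
  have hgmem : MemLp g 2 ν := Lp.memLp g0
  have hgint : Integrable g ν := hgmem.integrable one_le_two
  have hrepr : ∀ n : ℤ, fourierCoeff g n = c n := by
    intro n
    have h1 : fourierBasis.repr g0 n = fourierCoeff g n := fourierBasis_repr g0 n
    rw [hg0, LinearIsometryEquiv.apply_symm_apply] at h1
    exact h1.symm
  have hpair : ∀ n : ℤ, (∫ x, fourier n x ∂μ) = ∫ x, fourier n x * g x ∂ν := by
    intro n
    have h1 : fourierCoeff g (-n) = c (-n) := hrepr (-n)
    rw [fourierCoeff] at h1
    simp only [neg_neg, smul_eq_mul] at h1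
    rw [h1, hc]
    simp only [neg_neg]
  have hext := pairing_ext μ g hgint hpair
  -- suppose singular
  intro hsing
  obtain ⟨s, hsm, hμs, hvs⟩ := hsing
  have hνs : ν sᶜ = 0 := by
    have h := hvs
    rw [AddCircle.volume_eq_smul_haarAddCircle] at h
    simpa using h
  have hμsc : μ sᶜ = 1 := by
    rw [measure_compl hsm (measure_ne_top μ s), hμs]
    simp
  -- absolute continuity of the integral of ‖g‖
  have hgfin : (∫⁻ x, (‖g x‖₊ : ENNReal) ∂ν) ≠ ⊤ := ne_of_lt hgint.hasFiniteIntegral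
  obtain ⟨δ, hδ0, hδ⟩ := exists_pos_setLIntegral_lt_of_measure_lt (μ := ν) hgfin
    (ε := ENNReal.ofReal (1/2)) (ne_of_gt (ENNReal.ofReal_pos.mpr (by norm_num)))
  -- compact K inside sᶜ with large μ-measure
  obtain ⟨K, hKs, hKc, hKlt⟩ := hsm.compl.exists_isCompact_lt_add (measure_ne_top μ _)
    (ε := 1/2) (by norm_num)
  rw [hμsc] at hKlt
  have hKhalf : (1/2 : ENNReal) < μ K := by
    by_contra hle
    push_neg at hle
    have : μ K + 1/2 ≤ 1 := by
      calc μ K + 1/2 ≤ 1/2 + 1/2 := add_le_add_left hle _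
        _ = 1 := ENNReal.add_halves 1
    exact absurd hKlt (not_lt.mpr this)
  have hνK : ν K = 0 := measure_mono_null hKs hνs
  -- open U ⊇ K with small ν-measure
  obtain ⟨U, hKU, hUo, hUlt⟩ := Set.exists_isOpen_lt_of_lt (μ := ν) K δ (by rw [hνK]; exact hδ0)
  have hUsmall : (∫⁻ x in U, (‖g x‖₊ : ENNReal) ∂ν) < ENNReal.ofReal (1/2) := hδ U hUlt
  -- Urysohn function
  obtain ⟨φr, hφ0, hφ1, hφicc⟩ := exists_continuous_zero_one_of_isCompact
    (hUo.isClosed_compl.isCompact) hKc.isClosed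
    (Set.disjoint_left.mpr fun x hx hxK => hx (hKU hxK))
  set φ : C(AddCircle (1:ℝ), ℂ) := ⟨fun x => (φr x : ℂ),
    Complex.continuous_ofReal.comp φr.continuous⟩ with hφ
  have hφr_int : Integrable (fun x => φr x) μ :=
    φr.continuous.integrable_of_hasCompactSupport
      (IsCompact.of_isClosed_subset isCompact_univ (isClosed_tsupport _) (Set.subset_univ _))
  -- lower bound for the μ-integral
  have hKr : (1/2 : ℝ) < (μ K).toReal := by
    have hhalf : ((1/2 : ENNReal)).toReal = (1/2 : ℝ) := by norm_num
    rw [← hhalf]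
    exact (ENNReal.toReal_lt_toReal (by norm_num) (measure_ne_top μ K)).mpr hKhalf
  have hge : (μ K).toReal ≤ ∫ x, φr x ∂μ := by
    calc (μ K).toReal = ∫ _x in K, (1:ℝ) ∂μ := by simp [Measure.real]
      _ = ∫ x in K, φr x ∂μ :=
          (setIntegral_congr_fun hKc.isClosed.measurableSet fun x hx => (hφ1 hx).symm)
      _ ≤ ∫ x, φr x ∂μ := setIntegral_le_integral hφr_int (ae_of_all _ fun x => (hφicc x).1)
  have hLHS : (1/2 : ℝ) < ‖∫ x, φ x ∂μ‖ := by
    have heq : (∫ x, φ x ∂μ) = ((∫ x, φr x ∂μ : ℝ) : ℂ) := integral_ofReal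
    rw [heq, Complex.norm_real, Real.norm_eq_abs]
    have := le_abs_self (∫ x, φr x ∂μ)
    linarith
  -- upper bound for the ν-integral
  have hφint : Integrable (fun x => φ x * g x) ν :=
    hgint.bdd_mul φ.continuous.aestronglyMeasurable (ae_of_all _ φ.norm_coe_le_norm)
  have hRHS : ‖∫ x, φ x * g x ∂ν‖ < (1/2 : ℝ) := by
    have hptwise : ∀ x, ‖φ x * g x‖ ≤ U.indicator (fun x => ‖g x‖) x := by
      intro x
      by_cases hx : x ∈ U
      · rw [Set.indicator_of_mem hx, norm_mul]
        have h1 : ‖φ x‖ ≤ 1 := by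
          rw [hφ]
          simp only [ContinuousMap.coe_mk, Complex.norm_real, Real.norm_eq_abs]
          exact abs_le.mpr ⟨by linarith [(hφicc x).1], (hφicc x).2⟩
        calc ‖φ x‖ * ‖g x‖ ≤ 1 * ‖g x‖ :=
              mul_le_mul_of_nonneg_right h1 (norm_nonneg _)
          _ = ‖g x‖ := one_mul _
      · rw [Set.indicator_of_notMem hx]
        have h0 : φr x = 0 := hφ0 hx
        rw [hφ]
        simp [ContinuousMap.coe_mk, h0]
    calc ‖∫ x, φ x * g x ∂ν‖ ≤ ∫ x, ‖φ x * g x‖ ∂ν := norm_integral_le_integral_norm _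
      _ ≤ ∫ x, U.indicator (fun x => ‖g x‖) x ∂ν :=
          integral_mono hφint.norm (hgint.norm.indicator hUo.measurableSet) hptwise
      _ = ∫ x in U, ‖g x‖ ∂ν := integral_indicator hUo.measurableSet
      _ = (∫⁻ x in U, (‖g x‖₊ : ENNReal) ∂ν).toReal :=
          integral_norm_eq_lintegral_enorm hgint.aestronglyMeasurable.restrict
      _ < (1/2 : ℝ) := by
          have := (ENNReal.toReal_lt_toReal (ne_top_of_lt hUsmall) ENNReal.ofReal_ne_top).mpr
            hUsmall
          rwa [ENNReal.toReal_ofReal (by norm_num)] at this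
  rw [hext φ] at hLHS
  linarith

/-- Let Q ⊆ ℕ∖{0} be nonempty with (Q+Q) ∩ Q = ∅ (equivalently ℕ∖Q is Δ₃⋆).
If μ is a probability measure on 𝕋 whose Fourier coefficients vanish outside
Q ∪ (−Q) ∪ {0}, then Σ_{s∈Q} |μ̂(s)|² ≤ 1 (over every finite subset of Q);
in particular μ is not singular with respect to Lebesgue measure. -/
theorem fourier_support_sum_free_not_singular (Q : Set ℕ) (hQne : Q.Nonempty)
    (hQ0 : 0 ∉ Q) (hsum : ∀ a ∈ Q, ∀ b ∈ Q, a + b ∉ Q)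
    (μ : Measure (AddCircle (1 : ℝ))) [IsProbabilityMeasure μ]
    (hsupp : ∀ n : ℤ, (∫ x, fourier (-n) x ∂μ) ≠ 0 →
      (∃ q ∈ Q, (q : ℤ) = n) ∨ (∃ q ∈ Q, -(q : ℤ) = n) ∨ n = 0) :
    (∀ t : Finset ℕ, ↑t ⊆ Q →
      ∑ s ∈ t, ‖∫ x, fourier (-(s : ℤ)) x ∂μ‖ ^ 2 ≤ 1)
    ∧ ¬ μ ⟂ₘ (volume : Measure (AddCircle (1 : ℝ))) := by
  have P : ∀ t : Finset ℕ, ↑t ⊆ Q →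
      ∑ s ∈ t, ‖∫ x, fourier (-(s : ℤ)) x ∂μ‖ ^ 2 ≤ 1 :=
    fun t ht => part1 Q hsum μ hsupp t ht
  exact ⟨P, not_singular_of_bound Q hQ0 μ hsupp P⟩
end

section
/- Let S = SIP⁺(5, 5², 5³, …) = { Σ_i ε_i 5^i : ε_i ∈ {−1,0,1}, finitely many nonzero } ∩ ℕ. Then S ∪ {0} is small: for every n ∈ ℕ, the set {i ∈ ℤ : [i, i+n] ∩ S = ∅} has bounded gaps. -/
lemma geom5_aux (n : ℕ) :
    4 * ∑ i ∈ Finset.range n, (5:ℤ) ^ (i + 1) = 5 ^ (n + 1) - 5 := by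
  induction n with
  | zero => simp
  | succ k ih =>
    rw [Finset.sum_range_succ, mul_add, ih]
    ring


/-- For S = SIP⁺(5, 5², 5³, …), the set S ∪ {0} is small: for every n, the set
of i ∈ ℤ such that the interval [i, i+n] is disjoint from S ∪ {0} has bounded
gaps. -/
theorem sip_powers_of_five_small (n : ℕ) :
    ∃ L : ℤ, 0 < L ∧ ∀ m : ℤ, ∃ i : ℤ, m ≤ i ∧ i ≤ m + L ∧
      ∀ j : ℤ, i ≤ j → j ≤ i + (n : ℤ) →
        ¬ ∃ a ∈ SIPset (fun t => 5 ^ (t + 1)) ∪ {0}, (a : ℤ) = j := by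
  set P : ℤ := 5 ^ (n + 1) with hP
  set M : ℤ := ∑ i ∈ Finset.range n, (5:ℤ) ^ (i + 1) with hM
  have hPpos : 0 < P := by positivity
  have h4M : 4 * M = P - 5 := geom5_aux n
  have hMn : (n : ℤ) ≤ M := by
    calc (n : ℤ) = ∑ _i ∈ Finset.range n, (1:ℤ) := by simp
    _ ≤ M := Finset.sum_le_sum (fun i _ => one_le_pow₀ (by norm_num))
  have hMnonneg : 0 ≤ M := le_trans (Int.ofNat_nonneg n) hMn
  refine ⟨P, hPpos, fun m => ?_⟩
  set r : ℤ := (M + 1 - m) % P with hr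
  have hr0 : 0 ≤ r := Int.emod_nonneg _ hPpos.ne'
  have hrP : r < P := Int.emod_lt_of_pos _ hPpos
  refine ⟨m + r, le_add_of_nonneg_right hr0, add_le_add_right hrP.le m, ?_⟩
  rintro j hij hjn ⟨a, ha, haj⟩
  set d : ℤ := j - (m + r) with hd
  have hd0 : 0 ≤ d := by omega
  have hdn : d ≤ (n : ℤ) := by omega
  -- compute j % P
  have hjmod : j % P = M + 1 + d := by
    have h1 : j % P = (M + 1 + d) % P := by
      have h2 : j = (M + 1 + d) + (- ((M + 1 - m) / P)) * P := by
        rw [hd, hr, Int.emod_def]; ring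
      rw [h2, Int.add_mul_emod_self_right]
    rw [h1, Int.emod_eq_of_lt (by omega) (by omega)]
  rcases ha with ha | ha
  · -- a ∈ SIPset
    obtain ⟨ha1, t, ε, hε, hsum⟩ := ha
    set L : ℤ := ∑ i ∈ t.filter (fun i => i < n), ε i * (5:ℤ) ^ (i + 1) with hL
    have habs : |L| ≤ M := by
      calc |L| ≤ ∑ i ∈ t.filter (fun i => i < n), |ε i * (5:ℤ) ^ (i + 1)| :=
            Finset.abs_sum_le_sum_abs _ _
      _ ≤ ∑ i ∈ t.filter (fun i => i < n), (5:ℤ) ^ (i + 1) := by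
            refine Finset.sum_le_sum (fun i _ => ?_)
            rw [abs_mul]
            have : |ε i| ≤ 1 := by rcases hε i with h | h | h <;> simp [h]
            calc |ε i| * |(5:ℤ) ^ (i + 1)| ≤ 1 * |(5:ℤ) ^ (i + 1)| := by
                  exact mul_le_mul_of_nonneg_right this (abs_nonneg _)
            _ = (5:ℤ) ^ (i + 1) := by rw [one_mul, abs_of_nonneg (by positivity)]
      _ ≤ M := by
            refine Finset.sum_le_sum_of_subset_of_nonneg ?_ (fun i _ _ => by positivity)
            intro i hi
            simp only [Finset.mem_filter] at hi
            exact Finset.mem_range.mpr hi.2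
    have hdvd : P ∣ ∑ i ∈ t.filter (fun i => ¬ i < n), ε i * (5:ℤ) ^ (i + 1) := by
      refine Finset.dvd_sum (fun i hi => ?_)
      simp only [Finset.mem_filter] at hi
      exact Dvd.dvd.mul_left (pow_dvd_pow 5 (by omega)) _
    obtain ⟨c, hc⟩ := hdvd
    have hjL : j % P = L % P := by
      have key : (∑ i ∈ t, ε i * (5:ℤ) ^ (i + 1)) = L + P * c := by
        rw [← Finset.sum_filter_add_sum_filter_not t (fun i => i < n)
          (fun i => ε i * ((5:ℤ) ^ (i + 1))), hc, ← hL]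
      have hsum' : (a : ℤ) = ∑ i ∈ t, ε i * (5:ℤ) ^ (i + 1) := by
        rw [hsum]; push_cast; rfl
      have hj' : j = L + c * P := by rw [← haj, hsum', key]; ring
      rw [hj', Int.add_mul_emod_self_right]
    obtain ⟨hLlo, hLhi⟩ := abs_le.mp habs
    rcases le_or_gt 0 L with hL0 | hL0
    · have hLP : L % P = L := Int.emod_eq_of_lt hL0 (by omega)
      have : M + 1 + d = L := by rw [← hjmod, hjL, hLP]
      omega
    · have hLP : L % P = L + P := by
        have h1 : L % P = (L + P) % P := by
          conv_rhs => rw [show L + P = L + P * 1 by ring, Int.add_mul_emod_self_left]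
        rw [h1, Int.emod_eq_of_lt (by omega) (by omega)]
      have : M + 1 + d = L + P := by rw [← hjmod, hjL, hLP]
      omega
  · -- a = 0
    simp only [Set.mem_singleton_iff] at ha
    subst ha
    simp only [Nat.cast_zero] at haj
    rw [← haj] at hjmod
    simp only [Int.zero_emod] at hjmod
    omega
end
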